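/- arXiv:1101.1539 — 6 statements merged into one kernel-verified Lean document; each statement's English description precedes it below -/
import Mathlib

section
/- For every n ≥ 1 and every A ⊆ ℝⁿ, the convex geometry Co(ℝⁿ, A) satisfies the n-Carousel Rule: for every S ⊆ A and all x, y ∈ A with x, y ∈ convexHull ℝ S, there exist a₁, …, aₙ ∈ S (not necessarily distinct) such that x ∈ convexHull ℝ ({y} ∪ {a₁, …, aₙ}). -/
/-- for every `n ≥ 1` and `A ⊆ ℝⁿ`, `Co(ℝⁿ, A)` satisfies the
`n`-Carousel Rule: if `x, y ∈ A` lie in the convex hull of `S ⊆ A`, then there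
exist `a₁, …, aₙ ∈ S` with `x ∈ convexHull ℝ ({y} ∪ {a₁, …, aₙ})`. -/
theorem stmt_3 (n : ℕ) (hn : 1 ≤ n) (A S : Set (Fin n → ℝ)) (hSA : S ⊆ A)
    (x y : Fin n → ℝ) (hxA : x ∈ A) (hyA : y ∈ A)
    (hxS : x ∈ convexHull ℝ S) (hyS : y ∈ convexHull ℝ S) :
    ∃ a : Fin n → (Fin n → ℝ), (∀ i, a i ∈ S) ∧
      x ∈ convexHull ℝ (insert y (Set.range a)) := by
  classical
  obtain ⟨s₀, hs₀⟩ : S.Nonempty := convexHull_nonempty_iff.mp ⟨x, hxS⟩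
  by_cases hxy : x = y
  · exact ⟨fun _ => s₀, fun _ => hs₀,
      subset_convexHull ℝ _ (by simp [hxy])⟩
  -- Carathéodory
  rw [convexHull_eq_union] at hxS
  simp only [Set.mem_iUnion] at hxS
  obtain ⟨t, htS, hai, hxt⟩ := hxS
  have hcard : t.card ≤ n + 1 := by
    have h1 := hai.card_le_finrank_succ
    have h2 : Module.finrank ℝ (vectorSpan ℝ (Set.range ((↑) : t → (Fin n → ℝ)))) ≤ n := by
      have := Submodule.finrank_le (vectorSpan ℝ (Set.range ((↑) : t → (Fin n → ℝ))))
      simpa [Module.finrank_fin_fun] using this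
    simpa [Fintype.card_coe] using h1.trans (Nat.add_le_add_right h2 1)
  rcases lt_or_eq_of_le hcard with hle | hEq
  · -- t.card ≤ n : pad an enumeration of t
    have hle : t.card ≤ n := by omega
    set a : Fin n → (Fin n → ℝ) :=
      fun i => if h : (i : ℕ) < t.card then ((t.equivFin.symm ⟨i, h⟩ : t) : Fin n → ℝ) else s₀
      with ha
    refine ⟨a, ?_, ?_⟩
    · intro i
      by_cases h : (i : ℕ) < t.card
      · simp only [ha, dif_pos h]
        exact htS (t.equivFin.symm ⟨i, h⟩).2
      · simp only [ha, dif_neg h]; exact hs₀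
    · have hsub : (↑t : Set (Fin n → ℝ)) ⊆ Set.range a := by
        intro z hz
        set j := t.equivFin ⟨z, hz⟩ with hj
        have hjn : (j : ℕ) < n := lt_of_lt_of_le j.isLt hle
        refine ⟨⟨(j : ℕ), hjn⟩, ?_⟩
        have : a ⟨(j : ℕ), hjn⟩ = ((t.equivFin.symm ⟨(j : ℕ), j.isLt⟩ : t) : Fin n → ℝ) :=
          dif_pos j.isLt
        rw [this]
        have : (⟨(j : ℕ), j.isLt⟩ : Fin t.card) = j := rfl
        rw [this, hj, Equiv.symm_apply_apply]
      exact convexHull_mono (hsub.trans (Set.subset_insert _ _)) hxt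
  · -- t.card = n + 1 : affine basis
    have hEq' : n + 1 = t.card := hEq.symm
    set e : Fin (n + 1) ≃ t := (finCongr hEq').trans t.equivFin.symm with he
    set p : Fin (n + 1) → (Fin n → ℝ) := fun i => ((e i : t) : Fin n → ℝ) with hp
    have hpS : ∀ i, p i ∈ S := fun i => htS (e i).2
    have hpt : Set.range p = (↑t : Set (Fin n → ℝ)) := by
      rw [hp]
      have : Set.range (((↑) : t → (Fin n → ℝ)) ∘ ⇑e)
          = Set.range ((↑) : t → (Fin n → ℝ)) := by
        rw [Set.range_comp, Equiv.range_eq_univ, Set.image_univ]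
      rw [show (fun i => ((e i : t) : Fin n → ℝ)) = ((↑) : t → (Fin n → ℝ)) ∘ ⇑e from rfl,
        this]
      ext z; simp
    have hpai : AffineIndependent ℝ p := (affineIndependent_equiv e).mpr hai
    have htop : affineSpan ℝ (Set.range p) = ⊤ := by
      rw [hpai.affineSpan_eq_top_iff_card_eq_finrank_add_one]
      simp [Module.finrank_fin_fun]
    set b : AffineBasis (Fin (n + 1)) ℝ (Fin n → ℝ) := ⟨p, hpai, htop⟩ with hb
    have hbp : ⇑b = p := rfl
    set c : Fin (n + 1) → ℝ := fun i => b.coord i x with hc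
    set d : Fin (n + 1) → ℝ := fun i => b.coord i y with hd
    have hc0 : ∀ i, 0 ≤ c i := by
      have hx' : x ∈ convexHull ℝ (Set.range ⇑b) := by rw [hbp, hpt]; exact hxt
      rw [b.convexHull_eq_nonneg_coord] at hx'
      exact hx'
    have hcs : ∑ i, c i = 1 := b.sum_coord_apply_eq_one x
    have hds : ∑ i, d i = 1 := b.sum_coord_apply_eq_one y
    have hxe : ∑ i, c i • p i = x := by rw [hc, ← hbp]; exact b.linear_combination_coord_eq_self x
    have hye : ∑ i, d i • p i = y := by rw [hd, ← hbp]; exact b.linear_combination_coord_eq_self y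
    -- find j with c j < d j
    have hF : (Finset.univ.filter fun i => c i < d i).Nonempty := by
      by_contra h
      rw [Finset.not_nonempty_iff_eq_empty, Finset.filter_eq_empty_iff] at h
      have hle' : ∀ i ∈ Finset.univ, d i ≤ c i := fun i hi => le_of_not_gt (h hi)
      have : ∀ i ∈ Finset.univ, d i = c i :=
        (Finset.sum_eq_sum_iff_of_le hle').mp (by rw [hcs, hds])
      exact hxy (b.ext_elem fun i => (this i (Finset.mem_univ i)).symm)
    obtain ⟨j, hjF, hjmin⟩ :=
      (Finset.univ.filter fun i => c i < d i).exists_min_image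
        (fun i => c i / (d i - c i)) hF
    rw [Finset.mem_filter] at hjF
    have hdj : 0 < d j - c j := by linarith [hjF.2]
    set s : ℝ := c j / (d j - c j) with hs
    have hs0 : 0 ≤ s := div_nonneg (hc0 j) hdj.le
    set w : Fin (n + 1) → ℝ := fun i => c i + s * (c i - d i) with hw
    have hw0 : ∀ i, 0 ≤ w i := by
      intro i
      rcases le_or_gt (d i) (c i) with h | h
      · have : 0 ≤ s * (c i - d i) := mul_nonneg hs0 (by linarith)
        simp only [hw]; linarith [hc0 i]
      · have hiF : i ∈ Finset.univ.filter fun i => c i < d i := by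
          simp [Finset.mem_filter, h]
        have hmin := hjmin i hiF
        have hdi : 0 < d i - c i := by linarith
        have : s * (d i - c i) ≤ c i := by
          rw [← le_div_iff₀ hdi]; exact hmin
        simp only [hw]; nlinarith
    have hwj : w j = 0 := by
      have : s * (d j - c j) = c j := div_mul_cancel₀ _ hdj.ne'
      show c j + s * (c j - d j) = 0
      nlinarith [this]
    have hwsum : ∑ i, w i = 1 := by
      have : ∑ i, w i = ∑ i, c i + s * (∑ i, c i - ∑ i, d i) := by
        simp only [hw, mul_sub, Finset.sum_add_distrib, Finset.sum_sub_distrib,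
          Finset.mul_sum]
      rw [this, hcs, hds]; ring
    set z : Fin n → ℝ := ∑ i, w i • p i with hz
    set a : Fin n → (Fin n → ℝ) := fun k => p (j.succAbove k) with haa
    have haS : ∀ k, a k ∈ S := fun k => hpS _
    -- z ∈ convexHull (range a)
    have hzsum : ∑ k : Fin n, w (j.succAbove k) = 1 := by
      have := Fin.sum_univ_succAbove (fun i => w i) j
      rw [hwsum, hwj, zero_add] at this
      exact this.symm
    have hzmem : z ∈ convexHull ℝ (Set.range a) := by
      have hcm : (Finset.univ : Finset (Fin n)).centerMass
          (fun k => w (j.succAbove k)) (fun k => a k) ∈ convexHull ℝ (Set.range a) :=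
        Finset.centerMass_mem_convexHull _ (fun k _ => hw0 _)
          (by rw [hzsum]; norm_num) (fun k _ => Set.mem_range_self k)
      have hcm2 : (Finset.univ : Finset (Fin n)).centerMass
          (fun k => w (j.succAbove k)) (fun k => a k)
          = ∑ k : Fin n, w (j.succAbove k) • a k :=
        Finset.centerMass_eq_of_sum_1 _ _ hzsum
      have hz2 : z = ∑ k : Fin n, w (j.succAbove k) • a k := by
        rw [hz, Fin.sum_univ_succAbove (fun i => w i • p i) j, hwj, zero_smul, zero_add]
      rw [hz2, ← hcm2]
      exact hcm
    -- x is a convex combination of y and z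
    have hkey : z + s • y = (1 + s) • x := by
      rw [hz, ← hxe, ← hye, Finset.smul_sum, Finset.smul_sum, ← Finset.sum_add_distrib]
      apply Finset.sum_congr rfl
      intro i _
      simp only [hw]
      module
    have h1s : (0:ℝ) < 1 + s := by linarith
    have hz3 : z = (1 + s) • x - s • y := by rw [← hkey]; abel
    have hxcomb : x = (s / (1 + s)) • y + (1 / (1 + s)) • z := by
      rw [hz3]
      match_scalars <;> field_simp <;> ring
    refine ⟨a, haS, ?_⟩
    have hy' : y ∈ convexHull ℝ (insert y (Set.range a)) :=
      subset_convexHull ℝ _ (Set.mem_insert _ _)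
    have hz' : z ∈ convexHull ℝ (insert y (Set.range a)) :=
      convexHull_mono (Set.subset_insert _ _) hzmem
    rw [hxcomb]
    exact convex_convexHull ℝ _ hy' hz'
      (div_nonneg hs0 h1s.le) (div_nonneg zero_le_one h1s.le)
      (by rw [← add_div, add_comm, div_self h1s.ne'])
end

section
/- Let (H, cl_H) be a convex geometry satisfying the n-Carousel Rule and let (G, cl_G) be a finite convex geometry that is a sub-geometry of (H, cl_H). Then (G, cl_G) satisfies the n-Carousel Rule. -/
/-- A convex geometry: a closure operator on subsets of `A` (extensive, monotone,
idempotent, valued in subsets of `A`) which is zero-closed and satisfies the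
anti-exchange axiom. -/
def IsConvexGeometry {α : Type*} (A : Set α) (cl : Set α → Set α) : Prop :=
  (∀ Y : Set α, Y ⊆ A → Y ⊆ cl Y) ∧
  (∀ Y : Set α, Y ⊆ A → cl Y ⊆ A) ∧
  (∀ Y Z : Set α, Y ⊆ Z → Z ⊆ A → cl Y ⊆ cl Z) ∧
  (∀ Y : Set α, Y ⊆ A → cl (cl Y) = cl Y) ∧
  cl ∅ = ∅ ∧
  (∀ x ∈ A, ∀ y ∈ A, x ≠ y → ∀ X : Set α, X ⊆ A → cl X = X →
    x ∈ cl (X ∪ {y}) → x ∉ X → y ∉ cl (X ∪ {x}))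

namespace CGaux

variable {α : Type*} {A : Set α} {cl : Set α → Set α}

lemma cl_union_cl_right (h : IsConvexGeometry A cl) {X Y : Set α}
    (hX : X ⊆ A) (hY : Y ⊆ A) : cl (X ∪ cl Y) = cl (X ∪ Y) := by
  obtain ⟨ext, sub, mono, idem, -, -⟩ := h
  have hXY : X ∪ Y ⊆ A := Set.union_subset hX hY
  have hXcY : X ∪ cl Y ⊆ A := Set.union_subset hX (sub Y hY)
  apply subset_antisymm
  · have h1 : X ∪ cl Y ⊆ cl (X ∪ Y) := by
      apply Set.union_subset
      · exact Set.Subset.trans Set.subset_union_left (ext _ hXY)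
      · exact mono Y (X ∪ Y) Set.subset_union_right hXY
    calc cl (X ∪ cl Y) ⊆ cl (cl (X ∪ Y)) := mono _ _ h1 (sub _ hXY)
      _ = cl (X ∪ Y) := idem _ hXY
  · exact mono _ _ (Set.union_subset_union_right X (ext Y hY)) hXcY

lemma cl_union_cl_left (h : IsConvexGeometry A cl) {X Y : Set α}
    (hX : X ⊆ A) (hY : Y ⊆ A) : cl (cl X ∪ Y) = cl (X ∪ Y) := by
  rw [Set.union_comm (cl X) Y, Set.union_comm X Y]
  exact cl_union_cl_right h hY hX

lemma closed_inter (h : IsConvexGeometry A cl) {X Y : Set α}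
    (hX : X ⊆ A) (hXc : cl X = X) (hY : Y ⊆ A) (hYc : cl Y = Y) :
    cl (X ∩ Y) = X ∩ Y := by
  obtain ⟨ext, sub, mono, idem, -, -⟩ := h
  have hXYA : X ∩ Y ⊆ A := Set.Subset.trans Set.inter_subset_left hX
  apply subset_antisymm
  · apply Set.subset_inter
    · calc cl (X ∩ Y) ⊆ cl X := mono _ _ Set.inter_subset_left hX
        _ = X := hXc
    · calc cl (X ∩ Y) ⊆ cl Y := mono _ _ Set.inter_subset_right hY
        _ = Y := hYc
  · exact ext _ hXYA

/-- In a finite convex geometry, `x` is an extreme point of `cl {x}`. -/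
lemma extreme_point (h : IsConvexGeometry A cl) (hfin : A.Finite)
    {x : α} (hx : x ∈ A) : x ∉ cl (cl {x} \ {x}) := by
  obtain ⟨ext, sub, mono, idem, hzero, hae⟩ := h
  set C : Set α := cl {x} with hC
  have hxA : ({x} : Set α) ⊆ A := Set.singleton_subset_iff.mpr hx
  have hCA : C ⊆ A := sub _ hxA
  have hxC : x ∈ C := ext _ hxA rfl
  have hCc : cl C = C := idem _ hxA
  intro hcon
  -- then cl (C \ {x}) = C
  have hWA : C \ {x} ⊆ A := Set.Subset.trans Set.diff_subset hCA
  have hWC : cl (C \ {x}) = C := by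
    apply subset_antisymm
    · calc cl (C \ {x}) ⊆ cl C := mono _ _ Set.diff_subset hCA
        _ = C := hCc
    · calc C = cl {x} := rfl
        _ ⊆ cl (cl (C \ {x})) := mono _ _ (Set.singleton_subset_iff.mpr hcon) (sub _ hWA)
        _ = cl (C \ {x}) := idem _ hWA
  -- find a maximal proper closed subset of C
  have hSfin : {X : Set α | X ⊆ C ∧ cl X = X ∧ X ≠ C}.Finite := by
    apply Set.Finite.subset (hfin.subset hCA).finite_subsets
    intro X hX; exact hX.1
  have hSne : ({X : Set α | X ⊆ C ∧ cl X = X ∧ X ≠ C}).Nonempty := by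
    refine ⟨∅, Set.empty_subset _, hzero, ?_⟩
    intro hcontra; exact (hcontra ▸ hxC : x ∈ (∅ : Set α))
  obtain ⟨X, hXmem, hXmax⟩ := hSfin.exists_maximalFor id _ hSne
  obtain ⟨hXC, hXcl, hXne⟩ := hXmem
  have hXA : X ⊆ A := hXC.trans hCA
  -- every element of C \ X generates C over X
  have hgen : ∀ e ∈ C, e ∉ X → cl (X ∪ {e}) = C := by
    intro e heC heX
    have hXeA : X ∪ {e} ⊆ A := Set.union_subset hXA (Set.singleton_subset_iff.mpr (hCA heC))
    have h1 : cl (X ∪ {e}) ⊆ C := by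
      calc cl (X ∪ {e}) ⊆ cl C :=
            mono _ _ (Set.union_subset hXC (Set.singleton_subset_iff.mpr heC)) hCA
        _ = C := hCc
    by_contra hne
    have hmem : cl (X ∪ {e}) ∈ {X : Set α | X ⊆ C ∧ cl X = X ∧ X ≠ C} :=
      ⟨h1, idem _ hXeA, hne⟩
    have hsub' : X ⊆ cl (X ∪ {e}) :=
      Set.Subset.trans Set.subset_union_left (ext _ hXeA)
    have : id X = id (cl (X ∪ {e})) := le_antisymm hsub' (hXmax hmem hsub')
    simp only [id_eq] at this
    have heIn : e ∈ cl (X ∪ {e}) := ext _ hXeA (Set.mem_union_right _ rfl)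
    rw [← this] at heIn
    exact heX heIn
  -- C \ X is a singleton
  have huniq : ∀ p ∈ C, p ∉ X → ∀ q ∈ C, q ∉ X → p = q := by
    intro p hpC hpX q hqC hqX
    by_contra hpq
    have h1 : p ∈ cl (X ∪ {q}) := (hgen q hqC hqX) ▸ hpC
    have h2 := hae p (hCA hpC) q (hCA hqC) hpq X hXA hXcl h1 hpX
    rw [hgen p hpC hpX] at h2
    exact h2 hqC
  -- x ∉ X
  have hxX : x ∉ X := by
    intro hxX
    apply hXne
    apply subset_antisymm hXC
    calc C = cl {x} := rfl
      _ ⊆ cl X := mono _ _ (Set.singleton_subset_iff.mpr hxX) hXA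
      _ = X := hXcl
  -- hence C \ {x} ⊆ X, so cl (C \ {x}) ⊆ X ≠ C, contradiction
  have hsubX : C \ {x} ⊆ X := by
    intro p hp
    by_contra hpX
    exact hp.2 (huniq p hp.1 hpX x hxC hxX)
  apply hXne
  apply subset_antisymm hXC
  calc C = cl (C \ {x}) := hWC.symm
    _ ⊆ cl X := mono _ _ hsubX hXA
    _ = X := hXcl

end CGaux

/-- The `n`-Carousel Rule for a closure operator `cl` on subsets of `A`. -/
def CarouselRule {α : Type*} (n : ℕ) (A : Set α) (cl : Set α → Set α) : Prop :=
  ∀ S : Set α, S ⊆ A → ∀ x y, x ∈ cl S → y ∈ cl S →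
    ∃ a : Fin n → α, (∀ i, a i ∈ S) ∧ x ∈ cl (insert y (Set.range a))

/-- `(A, clG)` is a sub-geometry of `(B, clH)`: there is an injective map `φ` from
`clG`-closed subsets of `A` to `clH`-closed subsets of `B` preserving intersections
and closures of unions. -/
def IsSubGeometry {α β : Type*} (A : Set α) (clG : Set α → Set α)
    (B : Set β) (clH : Set β → Set β) : Prop :=
  ∃ φ : Set α → Set β,
    (∀ X : Set α, X ⊆ A → clG X = X → φ X ⊆ B ∧ clH (φ X) = φ X) ∧
    (∀ X Y : Set α, X ⊆ A → clG X = X → Y ⊆ A → clG Y = Y → φ X = φ Y → X = Y) ∧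
    (∀ X Y : Set α, X ⊆ A → clG X = X → Y ⊆ A → clG Y = Y →
      φ (X ∩ Y) = φ X ∩ φ Y) ∧
    (∀ X Y : Set α, X ⊆ A → clG X = X → Y ⊆ A → clG Y = Y →
      φ (clG (X ∪ Y)) = clH (φ X ∪ φ Y))

/-- the `n`-Carousel Rule is inherited by finite sub-geometries. -/
theorem stmt_4 {α β : Type*} (n : ℕ)
    (H : Set β) (clH : Set β → Set β) (hH : IsConvexGeometry H clH)
    (hHcar : CarouselRule n H clH)
    (G : Set α) (clG : Set α → Set α) (hG : IsConvexGeometry G clG)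
    (hGfin : G.Finite)
    (hsub : IsSubGeometry G clG H clH) :
    CarouselRule n G clG := by
  classical
  obtain ⟨φ, hφcl, hφinj, hφmeet, hφjoin⟩ := hsub
  have extG := hG.1; have subG := hG.2.1; have monoG := hG.2.2.1
  have idemG := hG.2.2.2.1; have zeroG := hG.2.2.2.2.1
  have subH := hH.2.1; have monoH := hH.2.2.1
  -- φ is monotone on closed sets
  have hφmono : ∀ X Y : Set α, X ⊆ G → clG X = X → Y ⊆ G → clG Y = Y → X ⊆ Y →
      φ X ⊆ φ Y := by
    intro X Y hX hXc hY hYc hXY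
    have h := hφmeet X Y hX hXc hY hYc
    rw [Set.inter_eq_left.mpr hXY] at h
    rw [h]
    exact Set.inter_subset_right
  -- the union formula
  have keyE : ∀ F : Set α, F.Finite → F ⊆ G →
      φ (clG F) = clH (φ ∅ ∪ ⋃ g ∈ F, φ (clG {g})) := by
    intro F hF
    refine Set.Finite.induction_on F hF ?_ ?_
    · intro _
      rw [zeroG, Set.biUnion_empty, Set.union_empty, (hφcl ∅ (Set.empty_subset G) zeroG).2]
    · intro a F' haF' hF'fin IH hins
      have haG : a ∈ G := hins (Set.mem_insert a F')
      have hF'G : F' ⊆ G := (Set.subset_insert a F').trans hins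
      have IH' := IH hF'G
      have hsing : ({a} : Set α) ⊆ G := Set.singleton_subset_iff.mpr haG
      have hclaG : clG {a} ⊆ G := subG _ hsing
      have hclac : clG (clG {a}) = clG {a} := idemG _ hsing
      have hclF'G : clG F' ⊆ G := subG _ hF'G
      have hclF'c : clG (clG F') = clG F' := idemG _ hF'G
      have hφaH : φ (clG {a}) ⊆ H := (hφcl _ hclaG hclac).1
      have hbigH : φ ∅ ∪ ⋃ g ∈ F', φ (clG {g}) ⊆ H := by
        apply Set.union_subset (hφcl ∅ (Set.empty_subset G) zeroG).1
        exact Set.iUnion₂_subset fun g hg =>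
          (hφcl _ (subG _ (Set.singleton_subset_iff.mpr (hF'G hg)))
            (idemG _ (Set.singleton_subset_iff.mpr (hF'G hg)))).1
      have step1 : clG (insert a F') = clG (clG {a} ∪ clG F') := by
        rw [CGaux.cl_union_cl_left hG hsing hclF'G,
          CGaux.cl_union_cl_right hG hsing hF'G, ← Set.insert_eq]
      calc φ (clG (insert a F'))
          = φ (clG (clG {a} ∪ clG F')) := by rw [step1]
        _ = clH (φ (clG {a}) ∪ φ (clG F')) := hφjoin _ _ hclaG hclac hclF'G hclF'c
        _ = clH (φ (clG {a}) ∪ clH (φ ∅ ∪ ⋃ g ∈ F', φ (clG {g}))) := by rw [IH']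
        _ = clH (φ (clG {a}) ∪ (φ ∅ ∪ ⋃ g ∈ F', φ (clG {g}))) :=
            CGaux.cl_union_cl_right hH hφaH hbigH
        _ = clH (φ ∅ ∪ ⋃ g ∈ insert a F', φ (clG {g})) := by
            rw [Set.biUnion_insert, Set.union_left_comm]
  -- main argument
  intro S hSG x y hx hy
  have hSfin : S.Finite := hGfin.subset hSG
  have hclSG : clG S ⊆ G := subG _ hSG
  have hclSc : clG (clG S) = clG S := idemG _ hSG
  have hxG : x ∈ G := hclSG hx
  have hyG : y ∈ G := hclSG hy
  obtain ⟨s₀, hs₀⟩ : S.Nonempty := by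
    rcases Set.eq_empty_or_nonempty S with h | h
    · rw [h, zeroG] at hx; exact absurd hx (Set.notMem_empty x)
    · exact h
  have hsingx : ({x} : Set α) ⊆ G := Set.singleton_subset_iff.mpr hxG
  have hCxG : clG {x} ⊆ G := subG _ hsingx
  have hCxc : clG (clG {x}) = clG {x} := idemG _ hsingx
  have hxCx : x ∈ clG {x} := extG _ hsingx rfl
  have hWG : clG {x} \ {x} ⊆ G := Set.diff_subset.trans hCxG
  have hMG : clG (clG {x} \ {x}) ⊆ G := subG _ hWG
  have hMc : clG (clG (clG {x} \ {x})) = clG (clG {x} \ {x}) := idemG _ hWG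
  have hxM : x ∉ clG (clG {x} \ {x}) := CGaux.extreme_point hG hGfin hxG
  have hMCx : clG (clG {x} \ {x}) ⊆ clG {x} := by
    calc clG (clG {x} \ {x}) ⊆ clG (clG {x}) := monoG _ _ Set.diff_subset hCxG
      _ = clG {x} := hCxc
  -- pick x' ∈ φ (clG {x}) \ φ (clG (clG {x} \ {x}))
  have hneq : φ (clG {x}) ≠ φ (clG (clG {x} \ {x})) := by
    intro hcontra
    have h := hφinj _ _ hCxG hCxc hMG hMc hcontra
    rw [h] at hxCx
    exact hxM hxCx
  have hnsub : ¬(φ (clG {x}) ⊆ φ (clG (clG {x} \ {x}))) := by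
    intro hcontra
    exact hneq (subset_antisymm hcontra (hφmono _ _ hMG hMc hCxG hCxc hMCx))
  obtain ⟨x', hx'Cx, hx'M⟩ := Set.not_subset.mp hnsub
  -- pick y' ∈ φ (clG {y})
  have hsingy : ({y} : Set α) ⊆ G := Set.singleton_subset_iff.mpr hyG
  have hCyG : clG {y} ⊆ G := subG _ hsingy
  have hCyc : clG (clG {y}) = clG {y} := idemG _ hsingy
  have hyCy : y ∈ clG {y} := extG _ hsingy rfl
  have hCyne : (φ (clG {y})).Nonempty := by
    rcases Set.eq_empty_or_nonempty (φ (clG {y})) with hE | hNE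
    · exfalso
      have h0 : φ ∅ ⊆ φ (clG {y}) :=
        hφmono ∅ _ (Set.empty_subset G) zeroG hCyG hCyc (Set.empty_subset _)
      have h1 : φ ∅ = φ (clG {y}) := by
        apply subset_antisymm h0
        rw [hE]
        exact Set.empty_subset _
      have h2 := hφinj ∅ _ (Set.empty_subset G) zeroG hCyG hCyc h1
      rw [← h2] at hyCy
      exact absurd hyCy (Set.notMem_empty y)
    · exact hNE
  obtain ⟨y', hy'Cy⟩ := hCyne
  -- the set T in H
  have hTH : (⋃ s ∈ S, φ (clG {s})) ⊆ H :=
    Set.iUnion₂_subset fun s hs =>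
      (hφcl _ (subG _ (Set.singleton_subset_iff.mpr (hSG hs)))
        (idemG _ (Set.singleton_subset_iff.mpr (hSG hs)))).1
  have habs : φ ∅ ∪ ⋃ s ∈ S, φ (clG {s}) = ⋃ s ∈ S, φ (clG {s}) := by
    apply Set.union_eq_self_of_subset_left
    calc φ ∅ ⊆ φ (clG {s₀}) :=
          hφmono ∅ _ (Set.empty_subset G) zeroG
            (subG _ (Set.singleton_subset_iff.mpr (hSG hs₀)))
            (idemG _ (Set.singleton_subset_iff.mpr (hSG hs₀))) (Set.empty_subset _)
      _ ⊆ ⋃ s ∈ S, φ (clG {s}) := Set.subset_biUnion_of_mem (u := fun s => φ (clG {s})) hs₀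
  have hφST : φ (clG S) = clH (⋃ s ∈ S, φ (clG {s})) := by
    rw [keyE S hSfin hSG, habs]
  have hCxsub : clG {x} ⊆ clG S := by
    calc clG {x} ⊆ clG (clG S) := monoG _ _ (Set.singleton_subset_iff.mpr hx) hclSG
      _ = clG S := hclSc
  have hCysub : clG {y} ⊆ clG S := by
    calc clG {y} ⊆ clG (clG S) := monoG _ _ (Set.singleton_subset_iff.mpr hy) hclSG
      _ = clG S := hclSc
  have hx'T : x' ∈ clH (⋃ s ∈ S, φ (clG {s})) := by
    rw [← hφST]
    exact hφmono _ _ hCxG hCxc hclSG hclSc hCxsub hx'Cx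
  have hy'T : y' ∈ clH (⋃ s ∈ S, φ (clG {s})) := by
    rw [← hφST]
    exact hφmono _ _ hCyG hCyc hclSG hclSc hCysub hy'Cy
  obtain ⟨a', ha'T, hx'cl⟩ := hHcar _ hTH x' y' hx'T hy'T
  -- choose preimage points
  have hchoice : ∀ i, ∃ s, s ∈ S ∧ a' i ∈ φ (clG {s}) := by
    intro i
    have h := ha'T i
    rw [Set.mem_iUnion₂] at h
    obtain ⟨s, hs, hmem⟩ := h
    exact ⟨s, hs, hmem⟩
  choose s hsS hsmem using hchoice
  refine ⟨s, hsS, ?_⟩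
  have hFG : insert y (Set.range s) ⊆ G :=
    Set.insert_subset_iff.mpr ⟨hyG, Set.range_subset_iff.mpr fun i => hSG (hsS i)⟩
  have hFfin : (insert y (Set.range s)).Finite := (Set.finite_range s).insert y
  have hUG : clG (insert y (Set.range s)) ⊆ G := subG _ hFG
  have hUc : clG (clG (insert y (Set.range s))) = clG (insert y (Set.range s)) := idemG _ hFG
  have hφU := keyE _ hFfin hFG
  have hBH : φ ∅ ∪ ⋃ g ∈ insert y (Set.range s), φ (clG {g}) ⊆ H := by
    apply Set.union_subset (hφcl ∅ (Set.empty_subset G) zeroG).1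
    exact Set.iUnion₂_subset fun g hg =>
      (hφcl _ (subG _ (Set.singleton_subset_iff.mpr (hFG hg)))
        (idemG _ (Set.singleton_subset_iff.mpr (hFG hg)))).1
  have hsubB : insert y' (Set.range a') ⊆
      φ ∅ ∪ ⋃ g ∈ insert y (Set.range s), φ (clG {g}) := by
    apply Set.insert_subset_iff.mpr
    constructor
    · exact Set.mem_union_right _ (Set.mem_biUnion (Set.mem_insert y _) hy'Cy)
    · rw [Set.range_subset_iff]
      intro i
      exact Set.mem_union_right _
        (Set.mem_biUnion (Set.mem_insert_of_mem _ ⟨i, rfl⟩) (hsmem i))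
  have hx'U : x' ∈ φ (clG (insert y (Set.range s))) := by
    rw [hφU]
    exact monoH _ _ hsubB hBH hx'cl
  -- pull back through φ
  have hmeet := hφmeet _ _ hCxG hCxc hUG hUc
  have hx'meet : x' ∈ φ (clG {x} ∩ clG (insert y (Set.range s))) := by
    rw [hmeet]
    exact ⟨hx'Cx, hx'U⟩
  by_contra hxU
  have hsubM : clG {x} ∩ clG (insert y (Set.range s)) ⊆ clG (clG {x} \ {x}) := by
    intro p hp
    have hpx : p ≠ x := fun h => hxU (h ▸ hp.2)
    exact extG _ hWG ⟨hp.1, hpx⟩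
  have hinterc := CGaux.closed_inter hG hCxG hCxc hUG hUc
  have hfinal : φ (clG {x} ∩ clG (insert y (Set.range s))) ⊆ φ (clG (clG {x} \ {x})) :=
    hφmono _ _ (Set.inter_subset_left.trans hCxG) hinterc hMG hMc hsubM
  exact hx'M (hfinal hx'meet)
end

section
/- With the construction of C_n: the family 𝒟 contains ∅ and D ∪ {x, y}, is closed under arbitrary intersections, and for every Z ∈ 𝒟 with Z ≠ D ∪ {x, y} there exists p ∈ (D ∪ {x, y}) \ Z with Z ∪ {p} ∈ 𝒟. Consequently C_n is a finite convex geometry (its closure operator cl_C is zero-closed and satisfies the anti-exchange axiom), and cl_C satisfies the n-Carathéodory property. -/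
open Set

private lemma hullCoordLe {n : ℕ} (B : AffineBasis (Fin (n+1)) ℝ (Fin n → ℝ)) (k : Fin (n+1))
    (c : ℝ) {Z : Set (Fin n → ℝ)} (h : ∀ z ∈ Z, B.coord k z ≤ c) {w : Fin n → ℝ}
    (hw : w ∈ convexHull ℝ Z) : B.coord k w ≤ c := by
  have hsub : convexHull ℝ Z ⊆ (B.coord k) ⁻¹' (Set.Iic c) :=
    convexHull_min (fun z hz => h z hz) ((convex_Iic c).affine_preimage (B.coord k))
  exact hsub hw

private lemma coordLt1 {n : ℕ} (hn : 1 ≤ n) (B : AffineBasis (Fin (n+1)) ℝ (Fin n → ℝ))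
    {x : Fin n → ℝ} (hx : ∀ k, 0 < B.coord k x) (k : Fin (n+1)) : B.coord k x < 1 := by
  have hsum : ∑ m, B.coord m x = 1 := B.sum_coord_apply_eq_one x
  haveI hnt : Nontrivial (Fin (n+1)) :=
    ⟨⟨0, by omega⟩, ⟨1, by omega⟩, Fin.ne_of_val_ne (by norm_num)⟩
  obtain ⟨l, hl⟩ := exists_ne k
  have hpos : 0 < ∑ m ∈ Finset.univ.erase k, B.coord m x :=
    Finset.sum_pos (fun m _ => hx m) ⟨l, Finset.mem_erase.2 ⟨hl, Finset.mem_univ l⟩⟩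
  have hsplit := Finset.add_sum_erase Finset.univ (fun m => B.coord m x) (Finset.mem_univ k)
  linarith

private lemma lemV {n : ℕ} (hn : 1 ≤ n) (B : AffineBasis (Fin (n+1)) ℝ (Fin n → ℝ))
    {a : Fin (n+1) → (Fin n → ℝ)} (hBa : ⇑B = a) {x y : Fin n → ℝ}
    (hx : ∀ k, 0 < B.coord k x) (hy : ∀ k, 0 < B.coord k y)
    (k : Fin (n+1)) {Z : Set (Fin n → ℝ)} (hZ : Z ⊆ Set.range a ∪ {x, y})
    (h : a k ∈ convexHull ℝ Z) : a k ∈ Z := by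
  by_contra hk
  set c : ℝ := max (B.coord k x) (max (B.coord k y) 0) with hc
  have hcz : ∀ z ∈ Z, B.coord k z ≤ c := by
    intro z hz
    rcases hZ hz with ⟨m, rfl⟩ | hz'
    · have hmk : m ≠ k := by rintro rfl; exact hk hz
      have h0 : B.coord k (a m) = 0 := by rw [← hBa]; exact B.coord_apply_ne (Ne.symm hmk)
      rw [h0]
      exact le_max_of_le_right (le_max_right _ _)
    · simp only [Set.mem_insert_iff, Set.mem_singleton_iff] at hz'
      rcases hz' with rfl | rfl
      · exact le_max_left _ _
      · exact le_max_of_le_right (le_max_left _ _)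
  have h1 : B.coord k (a k) ≤ c := hullCoordLe B k c hcz h
  have h2 : B.coord k (a k) = 1 := by rw [← hBa]; exact B.coord_apply_eq k
  have hclt : c < 1 := max_lt (coordLt1 hn B hx k) (max_lt (coordLt1 hn B hy k) zero_lt_one)
  rw [h2] at h1
  linarith

private lemma lemX {n : ℕ} (B : AffineBasis (Fin (n+1)) ℝ (Fin n → ℝ))
    {a : Fin (n+1) → (Fin n → ℝ)} (hBa : ⇑B = a)
    {x y : Fin n → ℝ}
    (hx : ∀ k, 0 < B.coord k x) (hxD : x ∉ Set.range a) {i : Fin (n+1)}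
    (hxiu : ∀ i', x ∈ convexHull ℝ (insert y (Set.range a \ {a i'})) → i' = i)
    {Z : Set (Fin n → ℝ)} (hZ : Z ⊆ Set.range a ∪ {x, y}) (hxZ : x ∉ Z)
    (hhx : x ∈ convexHull ℝ Z) :
    Z = insert y (Set.range a \ {a i}) ∨ Set.range a ⊆ Z := by
  by_cases hD : Set.range a ⊆ Z
  · exact Or.inr hD
  obtain ⟨p, ⟨k, rfl⟩, hk⟩ := not_subset.mp hD
  have h1 : ∀ l, a l ∉ Z → Z ⊆ insert y (Set.range a \ {a l}) := by
    intro l hl z hz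
    rcases hZ hz with hm | hz'
    · exact Set.mem_insert_of_mem _ ⟨hm, fun he => hl (Set.mem_singleton_iff.1 he ▸ hz)⟩
    · simp only [Set.mem_insert_iff, Set.mem_singleton_iff] at hz'
      rcases hz' with rfl | rfl
      · exact absurd hz hxZ
      · exact Set.mem_insert _ _
  have h2 : ∀ l, a l ∉ Z → l = i := fun l hl => hxiu l (convexHull_mono (h1 l hl) hhx)
  have hki : a i ∉ Z := by rw [← h2 k hk]; exact hk
  have hsub : Set.range a \ {a i} ⊆ Z := by
    rintro p ⟨⟨m, rfl⟩, hne⟩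
    by_contra hmZ
    exact hne (by rw [h2 m hmZ]; exact Set.mem_singleton _)
  by_cases hy : y ∈ Z
  · exact Or.inl (Set.Subset.antisymm (h1 i hki) (Set.insert_subset hy hsub))
  · exfalso
    have hcz : ∀ z ∈ Z, B.coord i z ≤ 0 := by
      intro z hz
      have hz1 := h1 i hki hz
      simp only [Set.mem_insert_iff, Set.mem_diff, Set.mem_singleton_iff] at hz1
      rcases hz1 with rfl | ⟨⟨m, rfl⟩, hne⟩
      · exact absurd hz hy
      · have hmi : m ≠ i := fun he => hne (by rw [he])
        have h0 : B.coord i (a m) = 0 := by rw [← hBa]; exact B.coord_apply_ne (Ne.symm hmi)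
        rw [h0]
    exact absurd (hullCoordLe B i 0 hcz hhx) (not_le.2 (hx i))
/-- for the construction of `C_n` (vertex set `D = range a` of an
`n`-simplex together with two interior points `x, y`, closed sets `𝒟` consisting of
the relatively convex subsets of `D ∪ {x, y}` plus the two extra sets
`{y} ∪ (D \ {aᵢ})` and `{x} ∪ (D \ {aⱼ})`):
`𝒟` contains `∅` and `D ∪ {x, y}`, is closed under (nonempty) arbitrary
intersections, and every `Z ∈ 𝒟` other than `D ∪ {x, y}` extends by one point inside
`𝒟`; consequently the associated closure operator `clC` is zero-closed and satisfies
the anti-exchange axiom (so `C_n` is a finite convex geometry), and `clC` satisfies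
the `n`-Carathéodory property. -/
theorem stmt_5 (n : ℕ) (hn : 1 ≤ n)
    (a : Fin (n + 1) → (Fin n → ℝ)) (ha : AffineIndependent ℝ a)
    (x y : Fin n → ℝ) (hxy : x ≠ y)
    (hxP : x ∈ interior (convexHull ℝ (Set.range a)))
    (hyP : y ∈ interior (convexHull ℝ (Set.range a)))
    (hxD : x ∉ Set.range a) (hyD : y ∉ Set.range a)
    (i j : Fin (n + 1))
    (hxi : x ∈ convexHull ℝ (insert y (Set.range a \ {a i})))
    (hxiu : ∀ i' : Fin (n + 1),
      x ∈ convexHull ℝ (insert y (Set.range a \ {a i'})) → i' = i)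
    (hyj : y ∈ convexHull ℝ (insert x (Set.range a \ {a j})))
    (hyju : ∀ j' : Fin (n + 1),
      y ∈ convexHull ℝ (insert x (Set.range a \ {a j'})) → j' = j)
    (𝒟 : Set (Set (Fin n → ℝ)))
    (h𝒟 : 𝒟 = {Z | Z ⊆ Set.range a ∪ {x, y} ∧
                convexHull ℝ Z ∩ (Set.range a ∪ {x, y}) = Z} ∪
              {insert y (Set.range a \ {a i}), insert x (Set.range a \ {a j})})
    (clC : Set (Fin n → ℝ) → Set (Fin n → ℝ))
    (hclC : ∀ Z : Set (Fin n → ℝ), clC Z = ⋂₀ {W | W ∈ 𝒟 ∧ Z ⊆ W}) :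
    (∅ ∈ 𝒟) ∧
    (Set.range a ∪ {x, y} ∈ 𝒟) ∧
    (∀ 𝒮 : Set (Set (Fin n → ℝ)), 𝒮 ⊆ 𝒟 → 𝒮.Nonempty → ⋂₀ 𝒮 ∈ 𝒟) ∧
    (∀ Z ∈ 𝒟, Z ≠ Set.range a ∪ {x, y} →
      ∃ p ∈ (Set.range a ∪ {x, y}) \ Z, insert p Z ∈ 𝒟) ∧
    (clC ∅ = ∅) ∧
    (∀ u ∈ Set.range a ∪ {x, y}, ∀ v ∈ Set.range a ∪ {x, y}, u ≠ v →
      ∀ X : Set (Fin n → ℝ), X ⊆ Set.range a ∪ {x, y} → clC X = X →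
        u ∈ clC (X ∪ {v}) → u ∉ X → v ∉ clC (X ∪ {u})) ∧
    (∀ S : Set (Fin n → ℝ), S ⊆ Set.range a ∪ {x, y} → ∀ z, z ∈ clC S →
      ∃ b : Fin (n + 1) → (Fin n → ℝ), (∀ k, b k ∈ S) ∧ z ∈ clC (Set.range b)) := by
  classical
  -- Setup: affine basis and barycentric coordinates
  have hcard : Fintype.card (Fin (n+1)) = Module.finrank ℝ (Fin n → ℝ) + 1 := by
    simp [Module.finrank_fintype_fun_eq_card]
  have htop : affineSpan ℝ (Set.range a) = ⊤ :=
    ha.affineSpan_eq_top_iff_card_eq_finrank_add_one.mpr hcard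
  let B : AffineBasis (Fin (n+1)) ℝ (Fin n → ℝ) := ⟨a, ha, htop⟩
  have hBa : ⇑B = a := rfl
  have hrange : Set.range ⇑B = Set.range a := by rw [hBa]
  have hInt : interior (convexHull ℝ (Set.range a)) = {w | ∀ k, 0 < B.coord k w} := by
    rw [← hrange]; exact B.interior_convexHull
  have hxpos : ∀ k, 0 < B.coord k x := by rw [hInt] at hxP; exact hxP
  have hypos : ∀ k, 0 < B.coord k y := by rw [hInt] at hyP; exact hyP
  have hxPc : x ∈ convexHull ℝ (Set.range a) := by
    rw [hInt] at hxP
    rw [← hrange, B.convexHull_eq_nonneg_coord]; exact fun k => (hxP k).le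
  have hyPc : y ∈ convexHull ℝ (Set.range a) := by
    rw [hInt] at hyP
    rw [← hrange, B.convexHull_eq_nonneg_coord]; exact fun k => (hyP k).le
  have hxS : x ∈ Set.range a ∪ {x, y} := Or.inr (Set.mem_insert x {y})
  have hyS : y ∈ Set.range a ∪ {x, y} := Or.inr (Set.mem_insert_of_mem x rfl)
  have hV : ∀ (k : Fin (n+1)) (Z : Set (Fin n → ℝ)), Z ⊆ Set.range a ∪ {x, y} →
      a k ∈ convexHull ℝ Z → a k ∈ Z := fun k Z hZ h => lemV hn B hBa hxpos hypos k hZ h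
  have hLX : ∀ (Z : Set (Fin n → ℝ)), Z ⊆ Set.range a ∪ {x, y} → x ∉ Z →
      x ∈ convexHull ℝ Z → Z = insert y (Set.range a \ {a i}) ∨ Set.range a ⊆ Z :=
    fun Z hZ h1 h2 => lemX B hBa hxpos hxD hxiu hZ h1 h2
  have hLY : ∀ (Z : Set (Fin n → ℝ)), Z ⊆ Set.range a ∪ {x, y} → y ∉ Z →
      y ∈ convexHull ℝ Z → Z = insert x (Set.range a \ {a j}) ∨ Set.range a ⊆ Z := by
    intro Z hZ h1 h2
    rw [Set.pair_comm x y] at hZ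
    exact lemX B hBa hypos hyD hyju hZ h1 h2
  -- basic membership facts
  have hEyS : insert y (Set.range a \ {a i}) ⊆ Set.range a ∪ {x, y} :=
    Set.insert_subset hyS (Set.diff_subset.trans Set.subset_union_left)
  have hExS : insert x (Set.range a \ {a j}) ⊆ Set.range a ∪ {x, y} :=
    Set.insert_subset hxS (Set.diff_subset.trans Set.subset_union_left)
  have hxEy : x ∉ insert y (Set.range a \ {a i}) := by
    intro h
    simp only [Set.mem_insert_iff, Set.mem_diff] at h
    rcases h with h | ⟨h, _⟩
    · exact hxy h
    · exact hxD h
  have hyEx : y ∉ insert x (Set.range a \ {a j}) := by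
    intro h
    simp only [Set.mem_insert_iff, Set.mem_diff] at h
    rcases h with h | ⟨h, _⟩
    · exact hxy h.symm
    · exact hyD h
  have haiEy : a i ∉ insert y (Set.range a \ {a i}) := by
    intro h
    simp only [Set.mem_insert_iff, Set.mem_diff, Set.mem_singleton_iff] at h
    rcases h with h | ⟨_, h⟩
    · exact hyD (h ▸ Set.mem_range_self i)
    · exact h trivial
  have hajEx : a j ∉ insert x (Set.range a \ {a j}) := by
    intro h
    simp only [Set.mem_insert_iff, Set.mem_diff, Set.mem_singleton_iff] at h
    rcases h with h | ⟨_, h⟩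
    · exact hxD (h ▸ Set.mem_range_self j)
    · exact h trivial
  have hMemS : ∀ Z ∈ 𝒟, Z ⊆ Set.range a ∪ {x, y} := by
    intro Z hZ
    rw [h𝒟] at hZ
    rcases hZ with h | h
    · exact h.1
    · simp only [Set.mem_insert_iff, Set.mem_singleton_iff] at h
      rcases h with rfl | rfl
      · exact hEyS
      · exact hExS
  -- the relative-convexity criterion
  have hRel : ∀ {W : Set (Fin n → ℝ)}, W ⊆ Set.range a ∪ {x, y} →
      (x ∈ W ∨ (W ≠ insert y (Set.range a \ {a i}) ∧ ¬ Set.range a ⊆ W)) →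
      (y ∈ W ∨ (W ≠ insert x (Set.range a \ {a j}) ∧ ¬ Set.range a ⊆ W)) →
      convexHull ℝ W ∩ (Set.range a ∪ {x, y}) = W := by
    intro W hWS hcx hcy
    apply Set.Subset.antisymm
    · rintro p ⟨hp1, hp2⟩
      rcases hp2 with ⟨k, rfl⟩ | hp2
      · exact hV k _ hWS hp1
      · simp only [Set.mem_insert_iff, Set.mem_singleton_iff] at hp2
        rcases hp2 with rfl | rfl
        · by_cases hxW : p ∈ W
          · exact hxW
          · rcases hLX _ hWS hxW hp1 with hEq | hsub
            · rcases hcx with h | ⟨h1, _⟩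
              · exact absurd h hxW
              · exact absurd hEq h1
            · rcases hcx with h | ⟨_, h2⟩
              · exact absurd h hxW
              · exact absurd hsub h2
        · by_cases hyW : p ∈ W
          · exact hyW
          · rcases hLY _ hWS hyW hp1 with hEq | hsub
            · rcases hcy with h | ⟨h1, _⟩
              · exact absurd h hyW
              · exact absurd hEq h1
            · rcases hcy with h | ⟨_, h2⟩
              · exact absurd h hyW
              · exact absurd hsub h2
    · intro p hp
      exact ⟨subset_convexHull ℝ W hp, hWS hp⟩
  have hFull : ∀ Z ∈ 𝒟, Set.range a ⊆ Z → Z = Set.range a ∪ {x, y} := by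
    intro Z hZm hsub
    rw [h𝒟] at hZm
    rcases hZm with ⟨hZS, hZrel⟩ | hZm
    · apply Set.Subset.antisymm hZS
      intro p hp
      rcases hp with hp | hp
      · exact hsub hp
      · simp only [Set.mem_insert_iff, Set.mem_singleton_iff] at hp
        rcases hp with rfl | rfl
        · rw [← hZrel]; exact ⟨convexHull_mono hsub hxPc, hxS⟩
        · rw [← hZrel]; exact ⟨convexHull_mono hsub hyPc, hyS⟩
    · exfalso
      simp only [Set.mem_insert_iff, Set.mem_singleton_iff] at hZm
      rcases hZm with rfl | rfl
      · exact haiEy (hsub (Set.mem_range_self i))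
      · exact hajEx (hsub (Set.mem_range_self j))
  -- Part 1
  have hEmptyD : ∅ ∈ 𝒟 := by
    rw [h𝒟]; left
    exact ⟨Set.empty_subset _, by simp⟩
  -- Part 2
  have hS𝒟 : Set.range a ∪ {x, y} ∈ 𝒟 := by
    rw [h𝒟]; left
    refine ⟨subset_rfl, ?_⟩
    rw [Set.inter_eq_right]
    exact subset_convexHull ℝ _
  -- Part 3
  have hInterP : ∀ 𝒮 : Set (Set (Fin n → ℝ)), 𝒮 ⊆ 𝒟 → 𝒮.Nonempty → ⋂₀ 𝒮 ∈ 𝒟 := by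
    rintro 𝒮 h𝒮 ⟨Z₀, hZ₀⟩
    have hTS : ⋂₀ 𝒮 ⊆ Set.range a ∪ {x, y} :=
      (Set.sInter_subset_of_mem hZ₀).trans (hMemS Z₀ (h𝒮 hZ₀))
    by_cases hEy : ⋂₀ 𝒮 = insert y (Set.range a \ {a i})
    · rw [h𝒟]; exact Or.inr (by simp [hEy])
    by_cases hEx : ⋂₀ 𝒮 = insert x (Set.range a \ {a j})
    · rw [h𝒟]; exact Or.inr (by simp [hEx])
    rw [h𝒟]; left
    refine ⟨hTS, ?_⟩
    apply Set.Subset.antisymm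
    · rintro p ⟨hp1, hp2⟩
      rcases hp2 with ⟨k, rfl⟩ | hp2
      · exact hV k _ hTS hp1
      · simp only [Set.mem_insert_iff, Set.mem_singleton_iff] at hp2
        rcases hp2 with rfl | rfl
        · by_cases hxT : p ∈ ⋂₀ 𝒮
          · exact hxT
          · rcases hLX _ hTS hxT hp1 with h | h
            · exact absurd h hEy
            · apply Set.mem_sInter.2
              intro Z hZ𝒮
              have hZfull : Z = Set.range a ∪ {p, y} :=
                hFull Z (h𝒮 hZ𝒮) (h.trans (Set.sInter_subset_of_mem hZ𝒮))
              rw [hZfull]; exact Or.inr (Set.mem_insert p {y})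
        · by_cases hyT : p ∈ ⋂₀ 𝒮
          · exact hyT
          · rcases hLY _ hTS hyT hp1 with h | h
            · exact absurd h hEx
            · apply Set.mem_sInter.2
              intro Z hZ𝒮
              have hZfull : Z = Set.range a ∪ {x, p} :=
                hFull Z (h𝒮 hZ𝒮) (h.trans (Set.sInter_subset_of_mem hZ𝒮))
              rw [hZfull]; exact Or.inr (Set.mem_insert_of_mem x rfl)
    · intro p hp
      exact ⟨subset_convexHull ℝ _ hp, hTS hp⟩
  -- Part 4
  have hExt : ∀ Z ∈ 𝒟, Z ≠ Set.range a ∪ {x, y} →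
      ∃ p ∈ (Set.range a ∪ {x, y}) \ Z, insert p Z ∈ 𝒟 := by
    intro Z hZ𝒟 hZne
    have hZS := hMemS Z hZ𝒟
    have hZm := hZ𝒟
    rw [h𝒟] at hZm
    rcases hZm with ⟨_, hZrel⟩ | hZm
    · -- relatively convex case
      have hnsub : ¬ Set.range a ⊆ Z := fun h => hZne (hFull Z hZ𝒟 h)
      by_cases hxZ : x ∈ Z
      · by_cases hyZ : y ∈ Z
        · obtain ⟨q, ⟨k, rfl⟩, hqZ⟩ := not_subset.mp hnsub
          refine ⟨a k, ⟨Or.inl ⟨k, rfl⟩, hqZ⟩, ?_⟩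
          rw [h𝒟]; left
          have hWS : insert (a k) Z ⊆ Set.range a ∪ {x, y} :=
            Set.insert_subset (Or.inl ⟨k, rfl⟩) hZS
          exact ⟨hWS, hRel hWS (Or.inl (Set.mem_insert_of_mem _ hxZ))
            (Or.inl (Set.mem_insert_of_mem _ hyZ))⟩
        · refine ⟨y, ⟨hyS, hyZ⟩, ?_⟩
          rw [h𝒟]; left
          have hWS : insert y Z ⊆ Set.range a ∪ {x, y} := Set.insert_subset hyS hZS
          exact ⟨hWS, hRel hWS (Or.inl (Set.mem_insert_of_mem _ hxZ))
            (Or.inl (Set.mem_insert _ _))⟩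
      · by_cases hyZ : y ∈ Z
        · refine ⟨x, ⟨hxS, hxZ⟩, ?_⟩
          rw [h𝒟]; left
          have hWS : insert x Z ⊆ Set.range a ∪ {x, y} := Set.insert_subset hxS hZS
          exact ⟨hWS, hRel hWS (Or.inl (Set.mem_insert _ _))
            (Or.inl (Set.mem_insert_of_mem _ hyZ))⟩
        · -- Z ⊆ range a
          have hZr : Z ⊆ Set.range a := by
            intro z hz
            rcases hZS hz with h | h
            · exact h
            · simp only [Set.mem_insert_iff, Set.mem_singleton_iff] at h
              rcases h with rfl | rfl
              · exact absurd hz hxZ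
              · exact absurd hz hyZ
          have hZneD : Z ≠ Set.range a := by
            intro h
            rw [h] at hZrel
            have hxmem : x ∈ convexHull ℝ (Set.range a) ∩ (Set.range a ∪ {x, y}) :=
              ⟨hxPc, hxS⟩
            rw [hZrel] at hxmem
            exact hxD hxmem
          obtain ⟨k, hk⟩ : ∃ k, a k ∉ Z := by
            by_contra h
            push_neg at h
            exact hZneD (Set.Subset.antisymm hZr (by rintro p ⟨m, rfl⟩; exact h m))
          by_cases h2 : ∃ l, l ≠ k ∧ a l ∉ Z
          · obtain ⟨l, hlk, hl⟩ := h2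
            refine ⟨a k, ⟨Or.inl ⟨k, rfl⟩, hk⟩, ?_⟩
            rw [h𝒟]; left
            have hWS : insert (a k) Z ⊆ Set.range a ∪ {x, y} :=
              Set.insert_subset (Or.inl ⟨k, rfl⟩) hZS
            have hnr : ¬ Set.range a ⊆ insert (a k) Z := by
              intro h
              have hal : a l ∈ insert (a k) Z := h ⟨l, rfl⟩
              rcases hal with h' | h'
              · exact hlk (ha.injective h')
              · exact hl h'
            refine ⟨hWS, hRel hWS (Or.inr ⟨?_, hnr⟩) (Or.inr ⟨?_, hnr⟩)⟩
            · intro h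
              have hymem : y ∈ insert (a k) Z := h ▸ Set.mem_insert y _
              rcases hymem with h' | h'
              · exact hyD (h' ▸ Set.mem_range_self k)
              · exact hyZ h'
            · intro h
              have hxmem : x ∈ insert (a k) Z := h ▸ Set.mem_insert x _
              rcases hxmem with h' | h'
              · exact hxD (h' ▸ Set.mem_range_self k)
              · exact hxZ h'
          · push_neg at h2
            have hZeq : Z = Set.range a \ {a k} := by
              apply Set.Subset.antisymm
              · intro z hz
                obtain ⟨m, rfl⟩ := hZr hz
                exact ⟨⟨m, rfl⟩, fun he => hk (Set.mem_singleton_iff.1 he ▸ hz)⟩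
              · rintro p ⟨⟨m, rfl⟩, hne⟩
                exact h2 m (fun he => hne (by rw [he]; exact Set.mem_singleton _))
            by_cases hkj : k = j
            · subst hkj
              refine ⟨x, ⟨hxS, hxZ⟩, ?_⟩
              rw [h𝒟, hZeq]
              exact Or.inr (by simp)
            · refine ⟨x, ⟨hxS, hxZ⟩, ?_⟩
              rw [h𝒟]; left
              have hWS : insert x Z ⊆ Set.range a ∪ {x, y} := Set.insert_subset hxS hZS
              refine ⟨hWS, hRel hWS (Or.inl (Set.mem_insert _ _)) (Or.inr ⟨?_, ?_⟩)⟩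
              · intro h
                have haj : a j ∈ insert x Z := by
                  apply Set.mem_insert_of_mem
                  rw [hZeq]
                  exact ⟨⟨j, rfl⟩, fun he =>
                    hkj (ha.injective (Set.mem_singleton_iff.1 he)).symm⟩
                rw [h] at haj
                exact hajEx haj
              · intro h
                have hak : a k ∈ insert x Z := h ⟨k, rfl⟩
                rcases hak with h' | h'
                · exact hxD (h' ▸ Set.mem_range_self k)
                · exact hk h'
    · -- the two extra sets
      simp only [Set.mem_insert_iff, Set.mem_singleton_iff] at hZm
      rcases hZm with rfl | rfl
      · refine ⟨x, ⟨hxS, hxEy⟩, ?_⟩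
        rw [h𝒟]; left
        have hWS : insert x (insert y (Set.range a \ {a i})) ⊆ Set.range a ∪ {x, y} :=
          Set.insert_subset hxS hEyS
        exact ⟨hWS, hRel hWS (Or.inl (Set.mem_insert _ _))
          (Or.inl (Set.mem_insert_of_mem _ (Set.mem_insert _ _)))⟩
      · refine ⟨y, ⟨hyS, hyEx⟩, ?_⟩
        rw [h𝒟]; left
        have hWS : insert y (insert x (Set.range a \ {a j})) ⊆ Set.range a ∪ {x, y} :=
          Set.insert_subset hyS hExS
        exact ⟨hWS, hRel hWS (Or.inl (Set.mem_insert_of_mem _ (Set.mem_insert _ _)))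
          (Or.inl (Set.mem_insert _ _))⟩
  -- closure operator facts
  have hclExt : ∀ Z : Set (Fin n → ℝ), Z ⊆ clC Z := by
    intro Z
    rw [hclC]
    exact Set.subset_sInter (fun W hW => hW.2)
  have hclMin : ∀ (Z W : Set (Fin n → ℝ)), W ∈ 𝒟 → Z ⊆ W → clC Z ⊆ W := by
    intro Z W h1 h2
    rw [hclC]
    exact Set.sInter_subset_of_mem ⟨h1, h2⟩
  have hclMem : ∀ Z : Set (Fin n → ℝ), Z ⊆ Set.range a ∪ {x, y} → clC Z ∈ 𝒟 := by
    intro Z hZ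
    rw [hclC]
    exact hInterP _ (fun W hW => hW.1) ⟨_, hS𝒟, hZ⟩
  -- Part 5
  have hclEmp : clC ∅ = ∅ :=
    Set.Subset.antisymm (by rw [hclC]; exact Set.sInter_subset_of_mem ⟨hEmptyD, subset_rfl⟩)
      (Set.empty_subset _)
  -- Part 6 : anti-exchange
  have hAE : ∀ u ∈ Set.range a ∪ {x, y}, ∀ v ∈ Set.range a ∪ {x, y}, u ≠ v →
      ∀ X : Set (Fin n → ℝ), X ⊆ Set.range a ∪ {x, y} → clC X = X →
        u ∈ clC (X ∪ {v}) → u ∉ X → v ∉ clC (X ∪ {u}) := by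
    intro u huS v hvS huv X hXS hXcl huK hunX hv
    have hX𝒟 : X ∈ 𝒟 := hXcl ▸ hclMem X hXS
    have hKS : X ∪ {v} ⊆ Set.range a ∪ {x, y} :=
      Set.union_subset hXS (Set.singleton_subset_iff.2 hvS)
    have hK'S : X ∪ {u} ⊆ Set.range a ∪ {x, y} :=
      Set.union_subset hXS (Set.singleton_subset_iff.2 huS)
    have hK𝒟 : clC (X ∪ {v}) ∈ 𝒟 := hclMem _ hKS
    have hK'𝒟 : clC (X ∪ {u}) ∈ 𝒟 := hclMem _ hK'S
    have hXK : X ⊆ clC (X ∪ {v}) := Set.subset_union_left.trans (hclExt _)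
    have hXK' : X ⊆ clC (X ∪ {u}) := Set.subset_union_left.trans (hclExt _)
    have hKK : clC (X ∪ {u}) = clC (X ∪ {v}) := by
      apply Set.Subset.antisymm
      · exact hclMin _ _ hK𝒟 (Set.union_subset hXK (Set.singleton_subset_iff.2 huK))
      · exact hclMin _ _ hK'𝒟 (Set.union_subset hXK' (Set.singleton_subset_iff.2 hv))
    have hvK : v ∈ clC (X ∪ {v}) := hclExt _ (Or.inr rfl)
    have hSfin : (Set.range a ∪ {x, y} : Set (Fin n → ℝ)).Finite :=
      (Set.finite_range a).union ((Set.finite_singleton y).insert x)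
    have hGfin : {T | T ∈ 𝒟 ∧ X ⊆ T ∧ ¬ clC (X ∪ {v}) ⊆ T}.Finite :=
      Set.Finite.subset hSfin.finite_subsets (fun T hT => hMemS T hT.1)
    obtain ⟨T, ⟨hT𝒟, hXT, hKT⟩, hmax⟩ :=
      Set.Finite.exists_maximalFor id _ hGfin
        ⟨X, hX𝒟, subset_rfl, fun h => hunX (h huK)⟩
    have hTne : T ≠ Set.range a ∪ {x, y} := by
      intro h
      exact hKT (h ▸ hMemS _ hK𝒟)
    obtain ⟨p, ⟨hpS, hpT⟩, hins⟩ := hExt T hT𝒟 hTne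
    have hKins : clC (X ∪ {v}) ⊆ insert p T := by
      by_contra hno
      have hmem : insert p T ∈ {T | T ∈ 𝒟 ∧ X ⊆ T ∧ ¬ clC (X ∪ {v}) ⊆ T} :=
        ⟨hins, hXT.trans (Set.subset_insert _ _), hno⟩
      have heq := hmax hmem (Set.subset_insert _ _)
      simp only [id] at heq
      exact hpT (heq (Set.mem_insert p T))
    have huT : u ∉ T := by
      intro h
      apply hKT
      rw [← hKK]
      exact hclMin _ _ hT𝒟 (Set.union_subset hXT (Set.singleton_subset_iff.2 h))
    have hvT : v ∉ T := by
      intro h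
      exact hKT (hclMin _ _ hT𝒟 (Set.union_subset hXT (Set.singleton_subset_iff.2 h)))
    have hup : u = p := (Set.mem_insert_iff.1 (hKins huK)).resolve_right huT
    have hvp : v = p := (Set.mem_insert_iff.1 (hKins hvK)).resolve_right hvT
    exact huv (hup.trans hvp.symm)
  refine ⟨hEmptyD, hS𝒟, hInterP, hExt, hclEmp, hAE, ?_⟩
  -- Part 7 : Carathéodory
  intro S₀ hS₀S z hz
  by_cases hzS₀ : z ∈ S₀
  · exact ⟨fun _ => z, fun _ => hzS₀, hclExt _ ⟨0, rfl⟩⟩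
  · have hW₀ : convexHull ℝ S₀ ∩ (Set.range a ∪ {x, y}) ∈ 𝒟 := by
      rw [h𝒟]; left
      refine ⟨Set.inter_subset_right, ?_⟩
      apply Set.Subset.antisymm
      · intro p hp
        refine ⟨?_, hp.2⟩
        exact convexHull_min Set.inter_subset_left (convex_convexHull ℝ S₀) hp.1
      · intro p hp
        exact ⟨subset_convexHull ℝ _ hp, hp.2⟩
    have hzW : z ∈ convexHull ℝ S₀ ∩ (Set.range a ∪ {x, y}) :=
      hclMin S₀ _ hW₀ (Set.subset_inter (subset_convexHull ℝ _) hS₀S) hz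
    rcases hzW.2 with ⟨k, rfl⟩ | hz2
    · exact absurd (hV k _ hS₀S hzW.1) hzS₀
    · simp only [Set.mem_insert_iff, Set.mem_singleton_iff] at hz2
      rcases hz2 with rfl | rfl
      · rcases hLX _ hS₀S hzS₀ hzW.1 with hEq | hsub
        · have hEy𝒟 : insert y (Set.range a \ {a i}) ∈ 𝒟 := by
            rw [h𝒟]; exact Or.inr (by simp)
          exact absurd (hclMin S₀ _ hEy𝒟 hEq.subset hz) hxEy
        · refine ⟨a, fun k => hsub ⟨k, rfl⟩, ?_⟩
          rw [hclC]
          apply Set.mem_sInter.2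
          rintro W ⟨hW𝒟, hWsub⟩
          have hWfull := hFull W hW𝒟 hWsub
          rw [hWfull]
          exact hxS
      · rcases hLY _ hS₀S hzS₀ hzW.1 with hEq | hsub
        · have hEx𝒟 : insert x (Set.range a \ {a j}) ∈ 𝒟 := by
            rw [h𝒟]; exact Or.inr (by simp)
          exact absurd (hclMin S₀ _ hEx𝒟 hEq.subset hz) hyEx
        · refine ⟨a, fun k => hsub ⟨k, rfl⟩, ?_⟩
          rw [hclC]
          apply Set.mem_sInter.2
          rintro W ⟨hW𝒟, hWsub⟩
          have hWfull := hFull W hW𝒟 hWsub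
          rw [hWfull]
          exact hyS
end

section
/- With the construction of C_n: the closure system C_n does not satisfy the n-Carousel Rule; specifically x, y ∈ cl_C(D), but for all a'₁, …, a'ₙ ∈ D one has x ∉ cl_C({y, a'₁, …, a'ₙ}) (and symmetrically y ∉ cl_C({x, a'₁, …, a'ₙ})). Consequently, for every A ⊆ ℝⁿ, C_n is not a sub-geometry of Co(ℝⁿ, A). -/
open Set

/-- Enumerate a nonempty finset of size ≤ n by a function from `Fin n`. -/
lemma enum_finset {E : Type*} {n : ℕ} (t : Finset E) (hne : t.Nonempty)
    (hcard : t.card ≤ n) : ∃ p : Fin n → E, (∀ i, p i ∈ t) ∧ ↑t ⊆ Set.range p := by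
  have hpos : 0 < t.card := Finset.card_pos.mpr hne
  let e := t.equivFin
  refine ⟨fun i => (e.symm ⟨min i.val (t.card - 1), by omega⟩ : E), fun i => (e.symm _).2, ?_⟩
  intro b hb
  refine ⟨⟨(e ⟨b, hb⟩).val, by omega⟩, ?_⟩
  have h1 : min ((⟨(e ⟨b, hb⟩).val, by omega⟩ : Fin n) : ℕ) (t.card - 1) = (e ⟨b, hb⟩).val := by
    have := (e ⟨b, hb⟩).isLt
    simp only [min_eq_left_iff]
    omega
  simp only [h1]
  have : (⟨(e ⟨b, hb⟩).val, by omega⟩ : Fin t.card) = e ⟨b, hb⟩ := by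
    apply Fin.ext; rfl
  rw [this, Equiv.symm_apply_apply]

/-- Geometric carousel: if `x' ∈ conv S` in `ℝⁿ` (n ≥ 1) and `y'` is any point, then
`x'` is in the convex hull of `y'` together with `n` points of `S`. -/
lemma carousel_lemma {n : ℕ} (hn : 1 ≤ n) (S : Set (Fin n → ℝ)) (x' y' : Fin n → ℝ)
    (hx : x' ∈ convexHull ℝ S) :
    ∃ p : Fin n → (Fin n → ℝ), (∀ i, p i ∈ S) ∧
      x' ∈ convexHull ℝ (insert y' (Set.range p)) := by
  classical
  rw [convexHull_eq_union] at hx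
  simp only [Set.mem_iUnion] at hx
  obtain ⟨t, hts, hind, hxt⟩ := hx
  have htne : t.Nonempty := by
    rcases t.eq_empty_or_nonempty with h | h
    · subst h; simp at hxt
    · exact h
  have hcard : t.card ≤ n + 1 := by
    have h1 := hind.card_le_finrank_succ
    have h2 : Module.finrank ℝ (vectorSpan ℝ (Set.range ((↑) : ↥t → (Fin n → ℝ)))) ≤ n := by
      have := Submodule.finrank_le (vectorSpan ℝ (Set.range ((↑) : ↥t → (Fin n → ℝ))))
      simpa [Module.finrank_fin_fun] using this
    have h3 : Fintype.card ↥t = t.card := Fintype.card_coe t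
    omega
  -- helper to conclude from a small finset
  have finish : ∀ T : Finset (Fin n → ℝ), T.Nonempty → T.card ≤ n → ↑T ⊆ S →
      x' ∈ convexHull ℝ (insert y' (↑T : Set (Fin n → ℝ))) →
      ∃ p : Fin n → (Fin n → ℝ), (∀ i, p i ∈ S) ∧
        x' ∈ convexHull ℝ (insert y' (Set.range p)) := by
    intro T hTne hTcard hTS hxT
    obtain ⟨p, hp1, hp2⟩ := enum_finset T hTne hTcard
    refine ⟨p, fun i => hTS (hp1 i), ?_⟩
    exact convexHull_mono (Set.insert_subset_insert hp2) hxT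
  rcases lt_or_eq_of_le hcard with hlt | heq
  · -- t.card ≤ n
    refine finish t htne (by omega) hts ?_
    exact convexHull_mono (Set.subset_insert _ _) hxt
  · -- t.card = n + 1 : simplex case
    by_cases hxy' : x' = y'
    · obtain ⟨d, hd⟩ := htne
      refine ⟨fun _ => d, fun _ => hts hd, ?_⟩
      rw [hxy']
      exact subset_convexHull ℝ _ (Set.mem_insert _ _)
    · -- build affine basis from t
      have hcardc : Fintype.card ↥t = Module.finrank ℝ (Fin n → ℝ) + 1 := by
        rw [Fintype.card_coe, Module.finrank_fin_fun, heq]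
      have htop : affineSpan ℝ (Set.range ((↑) : ↥t → (Fin n → ℝ))) = ⊤ :=
        hind.affineSpan_eq_top_iff_card_eq_finrank_add_one.mpr hcardc
      let b : AffineBasis ↥t ℝ (Fin n → ℝ) := ⟨((↑) : ↥t → (Fin n → ℝ)), hind, htop⟩
      have hbrange : Set.range (b : ↥t → (Fin n → ℝ)) = (↑t : Set (Fin n → ℝ)) :=
        Subtype.range_coe
      have hl0 : ∀ i, 0 ≤ b.coord i x' := by
        have := b.convexHull_eq_nonneg_coord
        rw [hbrange] at this
        rw [this] at hxt
        exact hxt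
      -- the set of indices where y' coordinate exceeds x' coordinate
      set lam : ↥t → ℝ := fun i => b.coord i x' with hlam
      set mu : ↥t → ℝ := fun i => b.coord i y' with hmu
      have hsuml : ∑ i, lam i = 1 := b.sum_coord_apply_eq_one x'
      have hsumm : ∑ i, mu i = 1 := b.sum_coord_apply_eq_one y'
      set I : Finset ↥t := Finset.univ.filter (fun i => lam i < mu i) with hI
      have hIne : I.Nonempty := by
        by_contra hIe
        rw [Finset.not_nonempty_iff_eq_empty] at hIe
        have hall : ∀ i, mu i ≤ lam i := by
          intro i
          by_contra hlt
          have : i ∈ I := by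
            rw [hI, Finset.mem_filter]
            exact ⟨Finset.mem_univ _, by linarith⟩
          rw [hIe] at this
          simp at this
        have hsum0 : ∑ i, (lam i - mu i) = 0 := by
          rw [Finset.sum_sub_distrib, hsuml, hsumm, sub_self]
        have hz := (Finset.sum_eq_zero_iff_of_nonneg
          (fun i _ => sub_nonneg.2 (hall i))).1 hsum0
        apply hxy'
        apply b.ext_elem
        intro i
        have := hz i (Finset.mem_univ i)
        rw [← hlam, ← hmu] at *
        have : lam i = mu i := by linarith [hz i (Finset.mem_univ i)]
        exact this
      obtain ⟨i₀, hi₀I, hmin⟩ := I.exists_min_image (fun i => lam i / (mu i - lam i)) hIne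
      have hi₀lt : lam i₀ < mu i₀ := by
        rw [hI, Finset.mem_filter] at hi₀I
        exact hi₀I.2
      set s : ℝ := lam i₀ / (mu i₀ - lam i₀) with hs
      have hs0 : 0 ≤ s := div_nonneg (hl0 i₀) (by linarith)
      set w : ↥t → ℝ := fun i => lam i - s * (mu i - lam i) with hw
      have hw0 : ∀ i, 0 ≤ w i := by
        intro i
        by_cases hi : lam i < mu i
        · have hiI : i ∈ I := by
            rw [hI, Finset.mem_filter]; exact ⟨Finset.mem_univ _, hi⟩
          have hle := hmin i hiI
          have hd : (0:ℝ) < mu i - lam i := by linarith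
          have : s * (mu i - lam i) ≤ lam i := by
            calc s * (mu i - lam i) ≤ (lam i / (mu i - lam i)) * (mu i - lam i) := by
                  apply mul_le_mul_of_nonneg_right hle (le_of_lt hd)
              _ = lam i := div_mul_cancel₀ _ (ne_of_gt hd)
          simp only [hw]
          linarith
        · have : s * (mu i - lam i) ≤ 0 :=
            mul_nonpos_of_nonneg_of_nonpos hs0 (by linarith)
          simp only [hw]
          linarith [hl0 i]
      have hwi₀ : w i₀ = 0 := by
        have hd : mu i₀ - lam i₀ ≠ 0 := ne_of_gt (by linarith)
        simp only [hw, hs]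
        rw [div_mul_cancel₀ _ hd, sub_self]
      have hsumw : ∑ i, w i = 1 := by
        simp only [hw]
        rw [Finset.sum_sub_distrib, ← Finset.mul_sum, Finset.sum_sub_distrib,
          hsuml, hsumm, sub_self, mul_zero, sub_zero]
      -- T = images of indices other than i₀
      set T : Finset (Fin n → ℝ) := (Finset.univ.erase i₀).image (fun i : ↥t => (i : Fin n → ℝ))
        with hT
      have hTS : ↑T ⊆ S := by
        intro v hv
        rw [hT] at hv
        simp only [Finset.coe_image, Set.mem_image] at hv
        obtain ⟨i, _, rfl⟩ := hv
        exact hts i.2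
      have hTcard : T.card ≤ n := by
        calc T.card ≤ (Finset.univ.erase i₀).card := Finset.card_image_le
          _ = Fintype.card ↥t - 1 := by rw [Finset.card_erase_of_mem (Finset.mem_univ _),
              Finset.card_univ]
          _ ≤ n := by rw [Fintype.card_coe, heq]; omega
      have hTne : T.Nonempty := by
        apply Finset.Nonempty.image
        rw [← Finset.card_pos, Finset.card_erase_of_mem (Finset.mem_univ _), Finset.card_univ,
          Fintype.card_coe, heq]
        omega
      -- z, the exit point
      set z : Fin n → ℝ := ∑ i, w i • (b i : Fin n → ℝ) with hz
      have hzT : z ∈ convexHull ℝ (↑T : Set (Fin n → ℝ)) := by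
        have hzer : ∑ i ∈ Finset.univ.erase i₀, w i • (b i : Fin n → ℝ) = z := by
          rw [hz]
          exact Finset.sum_erase _ (by rw [hwi₀, zero_smul])
        have hsumw' : ∑ i ∈ Finset.univ.erase i₀, w i = 1 := by
          rw [Finset.sum_erase _ hwi₀, hsumw]
        have hcm := Finset.centerMass_mem_convexHull (Finset.univ.erase i₀)
          (fun i _ => hw0 i) (by rw [hsumw']; norm_num)
          (z := fun i : ↥t => (b i : Fin n → ℝ)) (s := (↑T : Set (Fin n → ℝ)))
          (fun i hi => by
            rw [hT]
            simp only [Finset.coe_image, Set.mem_image]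
            exact ⟨i, by simpa using hi, rfl⟩)
        rwa [Finset.centerMass_eq_of_sum_1 _ _ hsumw', hzer] at hcm
      have hx'eq : x' = ∑ i, lam i • (b i : Fin n → ℝ) :=
        (b.linear_combination_coord_eq_self x').symm
      have hy'eq : y' = ∑ i, mu i • (b i : Fin n → ℝ) :=
        (b.linear_combination_coord_eq_self y').symm
      have hzeq : z = (1 + s) • x' - s • y' := by
        rw [hz, hx'eq, hy'eq, Finset.smul_sum, Finset.smul_sum, ← Finset.sum_sub_distrib]
        apply Finset.sum_congr rfl
        intro i _
        rw [smul_smul, smul_smul, ← sub_smul]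
        congr 1
        simp only [hw]
        ring
      have h1s : (0:ℝ) < 1 + s := by linarith
      have hx'comb : x' = (1 / (1 + s)) • z + (s / (1 + s)) • y' := by
        rw [hzeq]
        funext c
        simp only [Pi.add_apply, Pi.smul_apply, Pi.sub_apply, smul_eq_mul]
        field_simp
        try ring
      have hx'mem : x' ∈ convexHull ℝ (insert y' (↑T : Set (Fin n → ℝ))) := by
        rw [hx'comb]
        have hzmem : z ∈ convexHull ℝ (insert y' (↑T : Set (Fin n → ℝ))) :=
          convexHull_mono (Set.subset_insert _ _) hzT
        have hy'mem : y' ∈ convexHull ℝ (insert y' (↑T : Set (Fin n → ℝ))) :=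
          subset_convexHull ℝ _ (Set.mem_insert _ _)
        refine (convex_convexHull ℝ _) hzmem hy'mem (by positivity) (by positivity) ?_
        field_simp
      exact finish T hTne hTcard hTS hx'mem
/-- the closure system `C_n` fails the `n`-Carousel Rule: `x, y` lie in
`clC D`, but `x` is not in the closure of `y` together with any `n` points of `D`
(and symmetrically for `y`). Consequently `C_n` is not a sub-geometry of
`Co(ℝⁿ, A')` for any `A' ⊆ ℝⁿ`. -/
theorem stmt_6 (n : ℕ) (hn : 1 ≤ n)
    (a : Fin (n + 1) → (Fin n → ℝ)) (ha : AffineIndependent ℝ a)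
    (x y : Fin n → ℝ) (hxy : x ≠ y)
    (hxP : x ∈ interior (convexHull ℝ (Set.range a)))
    (hyP : y ∈ interior (convexHull ℝ (Set.range a)))
    (hxD : x ∉ Set.range a) (hyD : y ∉ Set.range a)
    (i j : Fin (n + 1))
    (hxi : x ∈ convexHull ℝ (insert y (Set.range a \ {a i})))
    (hxiu : ∀ i' : Fin (n + 1),
      x ∈ convexHull ℝ (insert y (Set.range a \ {a i'})) → i' = i)
    (hyj : y ∈ convexHull ℝ (insert x (Set.range a \ {a j})))
    (hyju : ∀ j' : Fin (n + 1),
      y ∈ convexHull ℝ (insert x (Set.range a \ {a j'})) → j' = j)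
    (𝒟 : Set (Set (Fin n → ℝ)))
    (h𝒟 : 𝒟 = {Z | Z ⊆ Set.range a ∪ {x, y} ∧
                convexHull ℝ Z ∩ (Set.range a ∪ {x, y}) = Z} ∪
              {insert y (Set.range a \ {a i}), insert x (Set.range a \ {a j})})
    (clC : Set (Fin n → ℝ) → Set (Fin n → ℝ))
    (hclC : ∀ Z : Set (Fin n → ℝ), clC Z = ⋂₀ {W | W ∈ 𝒟 ∧ Z ⊆ W}) :
    (x ∈ clC (Set.range a)) ∧
    (y ∈ clC (Set.range a)) ∧
    (∀ a' : Fin n → (Fin n → ℝ), (∀ k, a' k ∈ Set.range a) →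
      x ∉ clC (insert y (Set.range a'))) ∧
    (∀ a' : Fin n → (Fin n → ℝ), (∀ k, a' k ∈ Set.range a) →
      y ∉ clC (insert x (Set.range a'))) ∧
    (∀ A' : Set (Fin n → ℝ),
      ¬ IsSubGeometry (Set.range a ∪ {x, y}) clC A'
          (fun Z => convexHull ℝ Z ∩ A')) := by
  classical
  have hainj : Function.Injective a := ha.injective
  set A : Set (Fin n → ℝ) := Set.range a ∪ {x, y} with hA
  have hxA : x ∈ A := Or.inr (Set.mem_insert _ _)
  have hyA : y ∈ A := Or.inr (Set.mem_insert_of_mem _ rfl)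
  have haA : ∀ k, a k ∈ A := fun k => Or.inl ⟨k, rfl⟩
  have hDA : Set.range a ⊆ A := Set.subset_union_left
  -- closure operator basics
  have hext : ∀ Z : Set (Fin n → ℝ), Z ⊆ clC Z := by
    intro Z z hz
    rw [hclC]
    exact Set.mem_sInter.mpr fun W hW => hW.2 hz
  have hle : ∀ (Z W : Set (Fin n → ℝ)), W ∈ 𝒟 → Z ⊆ W → clC Z ⊆ W := by
    intro Z W hW hZW
    rw [hclC]
    exact Set.sInter_subset_of_mem ⟨hW, hZW⟩
  have hmonoC : ∀ Z₁ Z₂ : Set (Fin n → ℝ), Z₁ ⊆ Z₂ → clC Z₁ ⊆ clC Z₂ := by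
    intro Z₁ Z₂ h z hz
    rw [hclC] at hz ⊢
    rw [Set.mem_sInter] at hz ⊢
    exact fun W hW => hz W ⟨hW.1, h.trans hW.2⟩
  have hidem : ∀ Z : Set (Fin n → ℝ), clC (clC Z) = clC Z := by
    intro Z
    refine subset_antisymm ?_ (hext _)
    have h1 : clC (clC Z) ⊆ ⋂₀ {W | W ∈ 𝒟 ∧ Z ⊆ W} := by
      apply Set.subset_sInter
      rintro W ⟨hW, hZW⟩
      exact hle (clC Z) W hW (hle Z W hW hZW)
    rwa [← hclC] at h1
  -- members of 𝒟
  have htrace𝒟 : ∀ Z : Set (Fin n → ℝ), convexHull ℝ Z ∩ A ∈ 𝒟 := by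
    intro Z
    rw [h𝒟]
    left
    refine ⟨Set.inter_subset_right, ?_⟩
    apply subset_antisymm
    · intro w hw
      exact ⟨convexHull_min Set.inter_subset_left (convex_convexHull ℝ Z) hw.1, hw.2⟩
    · intro w hw
      exact ⟨subset_convexHull ℝ _ hw, hw.2⟩
  have hA𝒟 : A ∈ 𝒟 := by
    have h1 := htrace𝒟 A
    rwa [Set.inter_eq_self_of_subset_right (subset_convexHull ℝ A)] at h1
  have hsing𝒟 : ∀ p ∈ A, ({p} : Set (Fin n → ℝ)) ∈ 𝒟 := by
    intro p hp
    have h1 := htrace𝒟 {p}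
    rwa [convexHull_singleton,
      Set.inter_eq_self_of_subset_left (Set.singleton_subset_iff.2 hp)] at h1
  have hsingC : ∀ p ∈ A, clC {p} = {p} := fun p hp =>
    subset_antisymm (hle _ _ (hsing𝒟 p hp) subset_rfl) (hext _)
  have hsubA : ∀ Z : Set (Fin n → ℝ), Z ⊆ A → clC Z ⊆ A := fun Z hZ => hle Z A hA𝒟 hZ
  -- Part 1
  have part1 : x ∈ clC (Set.range a) := by
    rw [hclC]
    apply Set.mem_sInter.mpr
    rintro W ⟨hW, hDW⟩
    rw [h𝒟] at hW
    rcases hW with ⟨hWA, hWtr⟩ | hW2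
    · have hx1 : x ∈ convexHull ℝ W := convexHull_mono hDW (interior_subset hxP)
      rw [← hWtr]
      exact ⟨hx1, hxA⟩
    · exfalso
      simp only [Set.mem_insert_iff, Set.mem_singleton_iff] at hW2
      rcases hW2 with h | h
      · have hmem := hDW ⟨i, rfl⟩
        rw [h] at hmem
        rcases Set.mem_insert_iff.1 hmem with h' | h'
        · exact hyD ⟨i, h'⟩
        · exact h'.2 rfl
      · have hmem := hDW ⟨j, rfl⟩
        rw [h] at hmem
        rcases Set.mem_insert_iff.1 hmem with h' | h'
        · exact hxD ⟨j, h'⟩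
        · exact h'.2 rfl
  -- Part 2
  have part2 : y ∈ clC (Set.range a) := by
    rw [hclC]
    apply Set.mem_sInter.mpr
    rintro W ⟨hW, hDW⟩
    rw [h𝒟] at hW
    rcases hW with ⟨hWA, hWtr⟩ | hW2
    · have hy1 : y ∈ convexHull ℝ W := convexHull_mono hDW (interior_subset hyP)
      rw [← hWtr]
      exact ⟨hy1, hyA⟩
    · exfalso
      simp only [Set.mem_insert_iff, Set.mem_singleton_iff] at hW2
      rcases hW2 with h | h
      · have hmem := hDW ⟨i, rfl⟩
        rw [h] at hmem
        rcases Set.mem_insert_iff.1 hmem with h' | h'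
        · exact hyD ⟨i, h'⟩
        · exact h'.2 rfl
      · have hmem := hDW ⟨j, rfl⟩
        rw [h] at hmem
        rcases Set.mem_insert_iff.1 hmem with h' | h'
        · exact hxD ⟨j, h'⟩
        · exact h'.2 rfl
  -- Part 3
  have part3 : ∀ a' : Fin n → (Fin n → ℝ), (∀ k, a' k ∈ Set.range a) →
      x ∉ clC (insert y (Set.range a')) := by
    intro a' ha' hmem
    by_cases hi' : a i ∈ Set.range a'
    · have hex : ∃ k, k ≠ i ∧ a k ∉ Set.range a' := by
        by_contra hcon
        push_neg at hcon
        have hall : ∀ m : Fin (n+1), ∃ t : Fin n, a' t = a m := by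
          intro m
          by_cases hm : m = i
          · subst hm
            obtain ⟨t, ht⟩ := hi'
            exact ⟨t, ht⟩
          · obtain ⟨t, ht⟩ := hcon m hm
            exact ⟨t, ht⟩
        choose f hf using hall
        have hinjf : Function.Injective f := by
          intro m₁ m₂ hm
          apply hainj
          rw [← hf m₁, ← hf m₂, hm]
        have hcard := Fintype.card_le_of_injective f hinjf
        simp only [Fintype.card_fin] at hcard
        omega
      obtain ⟨k, hki, hk⟩ := hex
      have hW := htrace𝒟 (insert y (Set.range a \ {a k}))
      have hsub : insert y (Set.range a') ⊆
          convexHull ℝ (insert y (Set.range a \ {a k})) ∩ A := by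
        intro z hz
        rcases Set.mem_insert_iff.1 hz with rfl | hz'
        · exact ⟨subset_convexHull ℝ _ (Set.mem_insert _ _), hyA⟩
        · obtain ⟨t, rfl⟩ := hz'
          have h1 : a' t ∈ Set.range a := ha' t
          have h2 : a' t ≠ a k := fun h => hk ⟨t, h⟩
          exact ⟨subset_convexHull ℝ _ (Set.mem_insert_of_mem _ ⟨h1, h2⟩), hDA h1⟩
      have hxW := hle _ _ hW hsub hmem
      exact hki (hxiu k hxW.1)
    · have hW𝒟 : insert y (Set.range a \ {a i}) ∈ 𝒟 := by
        rw [h𝒟]; right; exact Set.mem_insert _ _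
      have hsub : insert y (Set.range a') ⊆ insert y (Set.range a \ {a i}) := by
        intro z hz
        rcases Set.mem_insert_iff.1 hz with rfl | hz'
        · exact Set.mem_insert _ _
        · obtain ⟨t, rfl⟩ := hz'
          exact Set.mem_insert_of_mem _ ⟨ha' t, fun h => hi' ⟨t, h⟩⟩
      have hxW := hle _ _ hW𝒟 hsub hmem
      rcases Set.mem_insert_iff.1 hxW with h | h
      · exact hxy h
      · exact hxD h.1
  -- Part 4 (symmetric)
  have part4 : ∀ a' : Fin n → (Fin n → ℝ), (∀ k, a' k ∈ Set.range a) →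
      y ∉ clC (insert x (Set.range a')) := by
    intro a' ha' hmem
    by_cases hj' : a j ∈ Set.range a'
    · have hex : ∃ k, k ≠ j ∧ a k ∉ Set.range a' := by
        by_contra hcon
        push_neg at hcon
        have hall : ∀ m : Fin (n+1), ∃ t : Fin n, a' t = a m := by
          intro m
          by_cases hm : m = j
          · subst hm
            obtain ⟨t, ht⟩ := hj'
            exact ⟨t, ht⟩
          · obtain ⟨t, ht⟩ := hcon m hm
            exact ⟨t, ht⟩
        choose f hf using hall
        have hinjf : Function.Injective f := by
          intro m₁ m₂ hm
          apply hainj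
          rw [← hf m₁, ← hf m₂, hm]
        have hcard := Fintype.card_le_of_injective f hinjf
        simp only [Fintype.card_fin] at hcard
        omega
      obtain ⟨k, hkj, hk⟩ := hex
      have hW := htrace𝒟 (insert x (Set.range a \ {a k}))
      have hsub : insert x (Set.range a') ⊆
          convexHull ℝ (insert x (Set.range a \ {a k})) ∩ A := by
        intro z hz
        rcases Set.mem_insert_iff.1 hz with rfl | hz'
        · exact ⟨subset_convexHull ℝ _ (Set.mem_insert _ _), hxA⟩
        · obtain ⟨t, rfl⟩ := hz'
          have h1 : a' t ∈ Set.range a := ha' t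
          have h2 : a' t ≠ a k := fun h => hk ⟨t, h⟩
          exact ⟨subset_convexHull ℝ _ (Set.mem_insert_of_mem _ ⟨h1, h2⟩), hDA h1⟩
      have hyW := hle _ _ hW hsub hmem
      exact hkj (hyju k hyW.1)
    · have hW𝒟 : insert x (Set.range a \ {a j}) ∈ 𝒟 := by
        rw [h𝒟]; right; exact Set.mem_insert_of_mem _ rfl
      have hsub : insert x (Set.range a') ⊆ insert x (Set.range a \ {a j}) := by
        intro z hz
        rcases Set.mem_insert_iff.1 hz with rfl | hz'
        · exact Set.mem_insert _ _
        · obtain ⟨t, rfl⟩ := hz'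
          exact Set.mem_insert_of_mem _ ⟨ha' t, fun h => hj' ⟨t, h⟩⟩
      have hyW := hle _ _ hW𝒟 hsub hmem
      rcases Set.mem_insert_iff.1 hyW with h | h
      · exact hxy h.symm
      · exact hyD h.1
  refine ⟨part1, part2, part3, part4, ?_⟩
  rintro A' ⟨φ, hcl, hinj, hint, huni⟩
  -- φ is monotone on closed sets
  have hmonoφ : ∀ X Y : Set (Fin n → ℝ), X ⊆ A → clC X = X → Y ⊆ A → clC Y = Y →
      X ⊆ Y → φ X ⊆ φ Y := by
    intro X Y hX hXc hY hYc hXY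
    have e := hint X Y hX hXc hY hYc
    rw [Set.inter_eq_self_of_subset_left hXY] at e
    exact e.le.trans Set.inter_subset_right
  have hempty : clC ∅ = ∅ := by
    apply subset_antisymm _ (Set.empty_subset _)
    have h0 : clC ∅ ⊆ {a ⟨0, by omega⟩} := hle _ _ (hsing𝒟 _ (haA _)) (Set.empty_subset _)
    have h1 : clC ∅ ⊆ {a ⟨1, by omega⟩} := hle _ _ (hsing𝒟 _ (haA _)) (Set.empty_subset _)
    intro z hz
    exfalso
    have e0 := h0 hz
    have e1 := h1 hz
    rw [Set.mem_singleton_iff] at e0 e1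
    have heqa : a ⟨0, by omega⟩ = a ⟨1, by omega⟩ := by rw [← e0, ← e1]
    have hv := congrArg Fin.val (hainj heqa)
    simp at hv
  have hxcl : clC {x} = {x} := hsingC x hxA
  have hycl : clC {y} = {y} := hsingC y hyA
  have hacl : ∀ k, clC {a k} = {a k} := fun k => hsingC _ (haA k)
  have hxsubA : ({x} : Set (Fin n → ℝ)) ⊆ A := Set.singleton_subset_iff.2 hxA
  have hysubA : ({y} : Set (Fin n → ℝ)) ⊆ A := Set.singleton_subset_iff.2 hyA
  have hasubA : ∀ k, ({a k} : Set (Fin n → ℝ)) ⊆ A :=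
    fun k => Set.singleton_subset_iff.2 (haA k)
  -- φ ∅ is strictly inside φ {x}
  have hφsub : φ ∅ ⊆ φ {x} :=
    hmonoφ ∅ {x} (Set.empty_subset _) hempty hxsubA hxcl (Set.empty_subset _)
  have hφne : φ ∅ ≠ φ {x} := by
    intro h
    have := hinj ∅ {x} (Set.empty_subset _) hempty hxsubA hxcl h
    exact (Set.singleton_ne_empty x) this.symm
  obtain ⟨x', hx'φ, hx'nφ⟩ := Set.exists_of_ssubset (hφsub.ssubset_of_ne hφne)
  have hφyne : (φ {y}).Nonempty := by
    rcases Set.eq_empty_or_nonempty (φ {y}) with h | h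
    · exfalso
      have hsub' : φ ∅ ⊆ φ {y} :=
        hmonoφ ∅ {y} (Set.empty_subset _) hempty hysubA hycl (Set.empty_subset _)
      have he : φ ∅ = φ {y} := subset_antisymm hsub' (by rw [h]; exact Set.empty_subset _)
      have := hinj ∅ {y} (Set.empty_subset _) hempty hysubA hycl he
      exact (Set.singleton_ne_empty y) this.symm
    · exact h
  obtain ⟨y', hy'φ⟩ := hφyne
  have hx'A' : x' ∈ A' := (hcl {x} hxsubA hxcl).1 hx'φ
  -- union/closure interchange
  have hUnionCl : ∀ Z₁ Z₂ : Set (Fin n → ℝ), clC (Z₁ ∪ clC Z₂) = clC (Z₁ ∪ Z₂) := by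
    intro Z₁ Z₂
    apply subset_antisymm
    · have h1 : Z₁ ∪ clC Z₂ ⊆ clC (Z₁ ∪ Z₂) :=
        Set.union_subset (Set.subset_union_left.trans (hext _))
          (hmonoC _ _ Set.subset_union_right)
      have h2 := hmonoC _ _ h1
      rwa [hidem] at h2
    · exact hmonoC _ _ (Set.union_subset_union_right _ (hext Z₂))
  have hstepφ : ∀ (k : Fin (n+1)) (Z : Set (Fin n → ℝ)), Z ⊆ A →
      φ (clC ({a k} ∪ Z)) = convexHull ℝ (φ {a k} ∪ φ (clC Z)) ∩ A' := by
    intro k Z hZ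
    have h1 := huni {a k} (clC Z) (hasubA k) (hacl k) (hsubA Z hZ) (hidem Z)
    rw [hUnionCl {a k} Z] at h1
    exact h1
  -- L1 : the image of the closure of D is inside the hull of the union of the φ {a k}
  have L1 : ∀ t : Finset (Fin (n+1)),
      φ (clC (insert (a ⟨0, by omega⟩) (a '' ↑t))) ⊆
        convexHull ℝ (⋃ k : Fin (n+1), φ {a k}) := by
    intro t
    induction t using Finset.induction_on with
    | empty =>
      have h0 : insert (a ⟨0, by omega⟩)
          (a '' (↑(∅ : Finset (Fin (n+1))) : Set (Fin (n+1)))) = {a ⟨0, by omega⟩} := by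
        simp
      rw [h0, hsingC _ (haA _)]
      exact (Set.subset_iUnion (fun k => φ {a k}) _).trans (subset_convexHull ℝ _)
    | @insert k t hkt ih =>
      have hZsub : insert (a ⟨0, by omega⟩) (a '' ↑t) ⊆ A := by
        intro z hz
        rcases Set.mem_insert_iff.1 hz with rfl | hz'
        · exact haA _
        · obtain ⟨m, _, rfl⟩ := hz'
          exact haA m
      have hset : insert (a ⟨0, by omega⟩) (a '' ↑(insert k t)) =
          {a k} ∪ (insert (a ⟨0, by omega⟩) (a '' ↑t)) := by
        rw [Finset.coe_insert, Set.image_insert_eq, Set.singleton_union, Set.insert_comm]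
      rw [hset, hstepφ k _ hZsub]
      refine Set.inter_subset_left.trans ?_
      apply convexHull_min _ (convex_convexHull ℝ _)
      apply Set.union_subset
      · exact (Set.subset_iUnion (fun k' => φ {a k'}) k).trans (subset_convexHull ℝ _)
      · exact ih
  have hDA' : φ (clC (Set.range a)) ⊆ convexHull ℝ (⋃ k : Fin (n+1), φ {a k}) := by
    have h1 := L1 Finset.univ
    have heq2 : insert (a ⟨0, by omega⟩)
        (a '' (↑(Finset.univ : Finset (Fin (n+1))) : Set (Fin (n+1)))) = Set.range a := by
      rw [Finset.coe_univ, Set.image_univ]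
      exact Set.insert_eq_self.2 ⟨_, rfl⟩
    rwa [heq2] at h1
  have hx'S' : x' ∈ convexHull ℝ (⋃ k : Fin (n+1), φ {a k}) := by
    apply hDA'
    exact hmonoφ {x} (clC (Set.range a)) hxsubA hxcl (hsubA _ hDA) (hidem _)
      (Set.singleton_subset_iff.2 part1) hx'φ
  obtain ⟨p, hp, hx'conv⟩ := carousel_lemma hn _ x' y' hx'S'
  have hchoice : ∀ t : Fin n, ∃ k : Fin (n+1), p t ∈ φ {a k} := by
    intro t
    have := hp t
    simpa [Set.mem_iUnion] using this
  choose kf hkf using hchoice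
  have hnotin : x ∉ clC (insert y (Set.range (fun t => a (kf t)))) :=
    part3 (fun t => a (kf t)) (fun t => ⟨kf t, rfl⟩)
  -- L2
  have L2 : ∀ s : Finset (Fin n),
      convexHull ℝ (φ {y} ∪ ⋃ t ∈ s, φ {a (kf t)}) ∩ A' ⊆
        φ (clC (insert y ((fun t => a (kf t)) '' ↑s))) := by
    intro s
    induction s using Finset.induction_on with
    | empty =>
      have h0 : (⋃ t ∈ (∅ : Finset (Fin n)), φ {a (kf t)}) = ∅ := by simp
      have h1 : insert y ((fun t => a (kf t)) '' (↑(∅ : Finset (Fin n)) : Set (Fin n))) =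
          {y} := by simp
      rw [h0, Set.union_empty, h1, hycl]
      exact le_of_eq (hcl {y} hysubA hycl).2
    | @insert t₀ s ht₀ ih =>
      have hZsub : insert y ((fun t => a (kf t)) '' ↑s) ⊆ A := by
        intro z hz
        rcases Set.mem_insert_iff.1 hz with rfl | hz'
        · exact hyA
        · obtain ⟨m, _, rfl⟩ := hz'
          exact haA (kf m)
      have hset : insert y ((fun t => a (kf t)) '' ↑(insert t₀ s)) =
          {a (kf t₀)} ∪ (insert y ((fun t => a (kf t)) '' ↑s)) := by
        rw [Finset.coe_insert, Set.image_insert_eq, Set.singleton_union, Set.insert_comm]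
      rw [hset, hstepφ (kf t₀) _ hZsub]
      have hbiU : (⋃ t ∈ insert t₀ s, φ {a (kf t)}) =
          φ {a (kf t₀)} ∪ ⋃ t ∈ s, φ {a (kf t)} := Finset.set_biUnion_insert _ _ _
      rw [hbiU]
      have hsub2 : φ {y} ∪ ⋃ t ∈ s, φ {a (kf t)} ⊆
          φ (clC (insert y ((fun t => a (kf t)) '' ↑s))) := by
        intro z hz
        apply ih
        refine ⟨subset_convexHull ℝ _ hz, ?_⟩
        rcases hz with hz | hz
        · exact (hcl {y} hysubA hycl).1 hz
        · simp only [Set.mem_iUnion] at hz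
          obtain ⟨t, _, hzt⟩ := hz
          exact (hcl {a (kf t)} (hasubA _) (hacl _)).1 hzt
      apply Set.inter_subset_inter_left
      apply convexHull_mono
      intro z hz
      rcases hz with hz | hz
      · exact Or.inr (hsub2 (Or.inl hz))
      · rcases hz with hz | hz
        · exact Or.inl hz
        · exact Or.inr (hsub2 (Or.inr hz))
  have hfin : x' ∈ φ (clC (insert y (Set.range (fun t => a (kf t))))) := by
    have hru : ((fun t => a (kf t)) '' (↑(Finset.univ : Finset (Fin n)) : Set (Fin n))) =
        Set.range (fun t => a (kf t)) := by
      rw [Finset.coe_univ, Set.image_univ]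
    have h1 := L2 Finset.univ
    rw [hru] at h1
    apply h1
    refine ⟨?_, hx'A'⟩
    refine convexHull_mono ?_ hx'conv
    intro z hz
    rcases Set.mem_insert_iff.1 hz with rfl | hz'
    · exact Or.inl hy'φ
    · obtain ⟨t, rfl⟩ := hz'
      refine Or.inr ?_
      simp only [Set.mem_iUnion]
      exact ⟨t, Finset.mem_univ t, hkf t⟩
  have hWsubA : insert y (Set.range (fun t => a (kf t))) ⊆ A := by
    intro z hz
    rcases Set.mem_insert_iff.1 hz with rfl | hz'
    · exact hyA
    · obtain ⟨t, rfl⟩ := hz'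
      exact haA (kf t)
  have hdisj : ({x} : Set (Fin n → ℝ)) ∩
      clC (insert y (Set.range (fun t => a (kf t)))) = ∅ := by
    apply Set.eq_empty_iff_forall_notMem.2
    rintro z ⟨hz1, hz2⟩
    rw [Set.mem_singleton_iff] at hz1
    subst hz1
    exact hnotin hz2
  have hφint := hint {x} (clC (insert y (Set.range (fun t => a (kf t)))))
    hxsubA hxcl (hsubA _ hWsubA) (hidem _)
  rw [hdisj] at hφint
  exact hx'nφ (hφint ▸ ⟨hx'φ, hfin⟩)
end

section
/- With the construction of C_n and the construction of K: C_n is a sub-geometry of Co(ℝ^{n+1}, K). Indeed, the map φ determined by φ(∅) = ∅, φ({aᵢ}) = {cᵢ, bᵢ} for i = 0, …, n, φ({x}) = {u}, φ({y}) = {v}, and φ(S) = ⋃_{s ∈ S} φ({s}) for every cl_C-closed set S, is a well-defined injective map from the closed sets of C_n to the closed sets of Co(ℝ^{n+1}, K) that preserves intersections (φ(X ∩ Y) = φ(X) ∩ φ(Y)) and closures of unions (φ(cl_C(X ∪ Y)) = τ(φ(X) ∪ φ(Y)), where τ(Z) = convexHull(Z) ∩ K). -/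
private lemma hull_bound {E : Type*} [AddCommGroup E] [Module ℝ E]
    (g h : E →ᵃ[ℝ] ℝ) (β r : ℝ) (S : Set E)
    (hS : ∀ p ∈ S, g p + β * h p ≤ r) :
    ∀ z ∈ convexHull ℝ S, g z + β * h z ≤ r := by
  intro z hz
  have hconv : Convex ℝ {p : E | g p + β * h p ≤ r} := by
    intro p hp q hq θ σ hθ hσ hsum
    simp only [Set.mem_setOf_eq] at hp hq ⊢
    rw [Convex.combo_affine_apply hsum, Convex.combo_affine_apply hsum]
    simp only [smul_eq_mul]
    have e1 : θ * (g p + β * h p) ≤ θ * r := mul_le_mul_of_nonneg_left hp hθ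
    have e2 : σ * (g q + β * h q) ≤ σ * r := mul_le_mul_of_nonneg_left hq hσ
    have e3 : θ * r + σ * r = r := by rw [← add_mul, hsum, one_mul]
    nlinarith [e1, e2, e3]
  exact convexHull_min hS hconv hz

private lemma hull_bound1 {E : Type*} [AddCommGroup E] [Module ℝ E]
    (g : E →ᵃ[ℝ] ℝ) (r : ℝ) (S : Set E)
    (hS : ∀ p ∈ S, g p ≤ r) : ∀ z ∈ convexHull ℝ S, g z ≤ r := by
  intro z hz
  have := hull_bound g g 0 r S (by intro p hp; simpa using hS p hp) z hz
  simpa using this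

private lemma coord_lt_one {ι E : Type*} [Fintype ι] [Nontrivial ι] [AddCommGroup E] [Module ℝ E]
    (β : AffineBasis ι ℝ E) (p : E) (hp : ∀ k, 0 < β.coord k p) (m : ι) : β.coord m p < 1 := by
  classical
  have hsum := β.sum_coord_apply_eq_one p
  obtain ⟨m', hm'⟩ := exists_ne m
  have hpair : β.coord m p + β.coord m' p ≤ ∑ k, β.coord k p := by
    have h1 : ({m, m'} : Finset ι) ⊆ Finset.univ := Finset.subset_univ _
    have h2 : ∑ k ∈ ({m, m'} : Finset ι), β.coord k p = β.coord m p + β.coord m' p :=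
      Finset.sum_pair (Ne.symm hm')
    rw [← h2]
    exact Finset.sum_le_sum_of_subset_of_nonneg h1 (fun k _ _ => (hp k).le)
  have := hp m'
  linarith

private def iotaL (n : ℕ) : (Fin n → ℝ) →ₗ[ℝ] (Fin (n + 1) → ℝ) where
  toFun z := Fin.snoc z 0
  map_add' z w := by
    funext m
    refine Fin.lastCases ?_ (fun i => ?_) m
    · simp
    · simp
  map_smul' r z := by
    funext m
    refine Fin.lastCases ?_ (fun i => ?_) m
    · simp
    · simp

private noncomputable def iotaI (n : ℕ) : (Fin n → ℝ) →ᵃⁱ[ℝ] (Fin (n + 1) → ℝ) :=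
  ⟨(iotaL n).toAffineMap, fun z => by
    show ‖iotaL n z‖ = ‖z‖
    have hiz : (iotaL n) z = Fin.snoc z (0 : ℝ) := rfl
    refine le_antisymm ?_ ?_
    · refine (pi_norm_le_iff_of_nonneg (norm_nonneg z)).2 fun m => ?_
      rw [hiz]
      refine Fin.lastCases ?_ (fun i => ?_) m
      · rw [Fin.snoc_last]
        simpa using norm_nonneg z
      · rw [Fin.snoc_castSucc]
        exact norm_le_pi_norm z i
    · refine (pi_norm_le_iff_of_nonneg (norm_nonneg _)).2 fun i => ?_
      have h : z i = (iotaL n) z i.castSucc := by rw [hiz, Fin.snoc_castSucc]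
      rw [h]
      exact norm_le_pi_norm ((iotaL n) z) i.castSucc⟩

private lemma intrinsic_subset_interior_of_span_top
    {V : Type*} [NormedAddCommGroup V] [NormedSpace ℝ V] {s : Set V}
    (h : affineSpan ℝ s = ⊤) : intrinsicInterior ℝ s ⊆ interior s := by
  rintro p ⟨z, hz, rfl⟩
  have hopen : IsOpen ((affineSpan ℝ s : Set V)) := by
    rw [h]
    simp only [AffineSubspace.top_coe]
    exact isOpen_univ
  have hmap : IsOpenMap ((↑) : (affineSpan ℝ s : Set V) → V) := hopen.isOpenMap_subtype_val
  have h2 : (z : V) ∈ interior (((↑) : (affineSpan ℝ s : Set V) → V) ''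
      (((↑) : (affineSpan ℝ s : Set V) → V) ⁻¹' s)) :=
    hmap.image_interior_subset _ (Set.mem_image_of_mem _ hz)
  exact interior_mono (Set.image_preimage_subset _ _) h2

/-- `C_n` is a sub-geometry of `Co(ℝ^{n+1}, K)`.  With the construction
of `C_n` (on `D ∪ {x, y} ⊆ ℝⁿ`, `D = range a`) and the construction of `K`
(`bᵢ = cᵢ + e`, `v = u + e`, `K = {c₀, b₀, …, cₙ, bₙ, u, v}`), the map `φ` determined
by `φ(∅) = ∅`, `φ({aᵢ}) = {cᵢ, bᵢ}`, `φ({x}) = {u}`, `φ({y}) = {v}` and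
`φ(S) = ⋃_{s ∈ S} φ({s})` is a well-defined injective map from the closed sets of
`C_n` to the closed sets of `Co(ℝ^{n+1}, K)` preserving intersections and closures
of unions. -/
theorem stmt_7 (n : ℕ) (hn : 1 ≤ n)
    -- the construction of C_n
    (a : Fin (n + 1) → (Fin n → ℝ)) (ha : AffineIndependent ℝ a)
    (x y : Fin n → ℝ) (hxy : x ≠ y)
    (hxP : x ∈ interior (convexHull ℝ (Set.range a)))
    (hyP : y ∈ interior (convexHull ℝ (Set.range a)))
    (hxD : x ∉ Set.range a) (hyD : y ∉ Set.range a)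
    (i j : Fin (n + 1))
    (hxi : x ∈ convexHull ℝ (insert y (Set.range a \ {a i})))
    (hxiu : ∀ i' : Fin (n + 1),
      x ∈ convexHull ℝ (insert y (Set.range a \ {a i'})) → i' = i)
    (hyj : y ∈ convexHull ℝ (insert x (Set.range a \ {a j})))
    (hyju : ∀ j' : Fin (n + 1),
      y ∈ convexHull ℝ (insert x (Set.range a \ {a j'})) → j' = j)
    (𝒟 : Set (Set (Fin n → ℝ)))
    (h𝒟 : 𝒟 = {Z | Z ⊆ Set.range a ∪ {x, y} ∧
                convexHull ℝ Z ∩ (Set.range a ∪ {x, y}) = Z} ∪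
              {insert y (Set.range a \ {a i}), insert x (Set.range a \ {a j})})
    (clC : Set (Fin n → ℝ) → Set (Fin n → ℝ))
    (hclC : ∀ Z : Set (Fin n → ℝ), clC Z = ⋂₀ {W | W ∈ 𝒟 ∧ Z ⊆ W})
    -- the construction of K
    (c : Fin (n + 1) → (Fin (n + 1) → ℝ)) (hc : AffineIndependent ℝ c)
    (hc0 : ∀ k, c k (Fin.last n) = 0)
    (u : Fin (n + 1) → ℝ)
    (hu : u ∈ intrinsicInterior ℝ (convexHull ℝ (Set.range c)))
    (b : Fin (n + 1) → (Fin (n + 1) → ℝ))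
    (hb : ∀ k, b k = c k + Pi.single (Fin.last n) 1)
    (v : Fin (n + 1) → ℝ) (hv : v = u + Pi.single (Fin.last n) 1)
    (K : Set (Fin (n + 1) → ℝ))
    (hK : K = Set.range c ∪ Set.range b ∪ {u, v}) :
    ∃ φ : Set (Fin n → ℝ) → Set (Fin (n + 1) → ℝ),
      φ ∅ = ∅ ∧
      (∀ k : Fin (n + 1), φ {a k} = {c k, b k}) ∧
      φ {x} = {u} ∧
      φ {y} = {v} ∧
      (∀ S : Set (Fin n → ℝ), S ⊆ Set.range a ∪ {x, y} → clC S = S →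
        φ S = ⋃ s ∈ S, φ {s}) ∧
      (∀ X : Set (Fin n → ℝ), X ⊆ Set.range a ∪ {x, y} → clC X = X →
        φ X ⊆ K ∧ convexHull ℝ (φ X) ∩ K = φ X) ∧
      (∀ X Y : Set (Fin n → ℝ), X ⊆ Set.range a ∪ {x, y} → clC X = X →
        Y ⊆ Set.range a ∪ {x, y} → clC Y = Y → φ X = φ Y → X = Y) ∧
      (∀ X Y : Set (Fin n → ℝ), X ⊆ Set.range a ∪ {x, y} → clC X = X →
        Y ⊆ Set.range a ∪ {x, y} → clC Y = Y → φ (X ∩ Y) = φ X ∩ φ Y) ∧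
      (∀ X Y : Set (Fin n → ℝ), X ⊆ Set.range a ∪ {x, y} → clC X = X →
        Y ⊆ Set.range a ∪ {x, y} → clC Y = Y →
        φ (clC (X ∪ Y)) = convexHull ℝ (φ X ∪ φ Y) ∩ K) := by
  classical
  have hnt : Nontrivial (Fin (n + 1)) := Fin.nontrivial_iff_two_le.mpr (by omega)
  set G : Set (Fin n → ℝ) := Set.range a ∪ {x, y} with hGdef
  have hGmem : ∀ p ∈ G, (∃ k, p = a k) ∨ p = x ∨ p = y := by
    intro p hp
    rw [hGdef] at hp
    rcases hp with ⟨k, rfl⟩ | hp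
    · exact .inl ⟨k, rfl⟩
    · rcases hp with rfl | rfl
      · exact .inr (.inl rfl)
      · exact .inr (.inr rfl)
  have hxG : x ∈ G := by rw [hGdef]; exact .inr (.inl rfl)
  have hyG : y ∈ G := by rw [hGdef]; exact .inr (.inr rfl)
  -- basis on the C_n side
  have hainj : Function.Injective a := ha.injective
  have haxk : ∀ k, a k ≠ x := fun k h => hxD ⟨k, h⟩
  have hayk : ∀ k, a k ≠ y := fun k h => hyD ⟨k, h⟩
  have htopa : affineSpan ℝ (Set.range a) = ⊤ := by
    rw [ha.affineSpan_eq_top_iff_card_eq_finrank_add_one]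
    simp [Module.finrank_fin_fun]
  let βa : AffineBasis (Fin (n + 1)) ℝ (Fin n → ℝ) := ⟨a, ha, htopa⟩
  have hxpos : ∀ m, 0 < βa.coord m x := by
    have h1 : x ∈ interior (convexHull ℝ (Set.range ⇑βa)) := hxP
    rw [βa.interior_convexHull] at h1
    exact h1
  have hypos : ∀ m, 0 < βa.coord m y := by
    have h1 : y ∈ interior (convexHull ℝ (Set.range ⇑βa)) := hyP
    rw [βa.interior_convexHull] at h1
    exact h1
  have hcoorda : ∀ m k, βa.coord m (a k) = if m = k then 1 else 0 := fun m k =>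
    βa.coord_apply m k
  have hxlt : ∀ m, βa.coord m x < 1 := fun m => coord_lt_one βa x hxpos m
  have hylt : ∀ m, βa.coord m y < 1 := fun m => coord_lt_one βa y hypos m
  -- vertices are not captured by hulls of other points of G
  have hP3 : ∀ Z : Set (Fin n → ℝ), Z ⊆ G → ∀ m, a m ∈ convexHull ℝ Z → a m ∈ Z := by
    intro Z hZG m hm
    by_contra ham
    set r : ℝ := max (βa.coord m x) (max (βa.coord m y) 0) with hr
    have hbd : ∀ p ∈ Z, βa.coord m p ≤ r := by
      intro p hp
      rcases hGmem p (hZG hp) with ⟨k, rfl⟩ | rfl | rfl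
      · have hk : ¬ m = k := fun h => ham (by rw [h]; exact hp)
        rw [hcoorda, if_neg hk]
        simp [hr]
      · exact le_max_left _ _
      · exact le_trans (le_max_left _ _) (le_max_right _ _)
    have hle := hull_bound1 (βa.coord m) r Z hbd (a m) hm
    rw [hcoorda, if_pos rfl] at hle
    have hrlt : r < 1 := by
      rw [hr]
      exact max_lt (hxlt m) (max_lt (hylt m) one_pos)
    linarith
  -- characterization of x ∈ hull Z
  have hxhull : ∀ Z : Set (Fin n → ℝ), Z ⊆ G →
      (x ∈ convexHull ℝ Z ↔ x ∈ Z ∨ Set.range a ⊆ Z ∨ (y ∈ Z ∧ ∀ m, m ≠ i → a m ∈ Z)) := by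
    intro Z hZG
    constructor
    · intro hx
      by_cases hxZ : x ∈ Z
      · exact .inl hxZ
      by_cases hra : Set.range a ⊆ Z
      · exact .inr (.inl hra)
      refine .inr (.inr ?_)
      by_cases hyZ : y ∈ Z
      · refine ⟨hyZ, fun m hmi => ?_⟩
        by_contra ham
        have hsub : Z ⊆ insert y (Set.range a \ {a m}) := by
          intro p hp
          rcases hGmem p (hZG hp) with ⟨k, rfl⟩ | rfl | rfl
          · exact Set.mem_insert_of_mem _ ⟨⟨k, rfl⟩, fun h => ham (by rw [← h]; exact hp)⟩
          · exact absurd hp hxZ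
          · exact Set.mem_insert _ _
        exact hmi (hxiu m (convexHull_mono hsub hx))
      · exfalso
        obtain ⟨q, ⟨m, rfl⟩, hq⟩ := Set.not_subset.mp hra
        have hbd : ∀ p ∈ Z, βa.coord m p ≤ 0 := by
          intro p hp
          rcases hGmem p (hZG hp) with ⟨k, rfl⟩ | rfl | rfl
          · have hk : ¬ m = k := fun h => hq (by rw [h]; exact hp)
            rw [hcoorda, if_neg hk]
          · exact absurd hp hxZ
          · exact absurd hp hyZ
        have := hull_bound1 (βa.coord m) 0 Z hbd x hx
        linarith [hxpos m]
    · rintro (hxZ | hra | ⟨hyZ, hmem⟩)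
      · exact subset_convexHull ℝ Z hxZ
      · exact convexHull_mono hra (interior_subset hxP)
      · refine convexHull_mono ?_ hxi
        intro p hp
        rcases hp with rfl | ⟨⟨k, rfl⟩, hne⟩
        · exact hyZ
        · exact hmem k fun h => hne (by rw [h]; exact rfl)
  have hyhull : ∀ Z : Set (Fin n → ℝ), Z ⊆ G →
      (y ∈ convexHull ℝ Z ↔ y ∈ Z ∨ Set.range a ⊆ Z ∨ (x ∈ Z ∧ ∀ m, m ≠ j → a m ∈ Z)) := by
    intro Z hZG
    constructor
    · intro hy
      by_cases hyZ : y ∈ Z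
      · exact .inl hyZ
      by_cases hra : Set.range a ⊆ Z
      · exact .inr (.inl hra)
      refine .inr (.inr ?_)
      by_cases hxZ : x ∈ Z
      · refine ⟨hxZ, fun m hmj => ?_⟩
        by_contra ham
        have hsub : Z ⊆ insert x (Set.range a \ {a m}) := by
          intro p hp
          rcases hGmem p (hZG hp) with ⟨k, rfl⟩ | rfl | rfl
          · exact Set.mem_insert_of_mem _ ⟨⟨k, rfl⟩, fun h => ham (by rw [← h]; exact hp)⟩
          · exact Set.mem_insert _ _
          · exact absurd hp hyZ
        exact hmj (hyju m (convexHull_mono hsub hy))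
      · exfalso
        obtain ⟨q, ⟨m, rfl⟩, hq⟩ := Set.not_subset.mp hra
        have hbd : ∀ p ∈ Z, βa.coord m p ≤ 0 := by
          intro p hp
          rcases hGmem p (hZG hp) with ⟨k, rfl⟩ | rfl | rfl
          · have hk : ¬ m = k := fun h => hq (by rw [h]; exact hp)
            rw [hcoorda, if_neg hk]
          · exact absurd hp hxZ
          · exact absurd hp hyZ
        have := hull_bound1 (βa.coord m) 0 Z hbd y hy
        linarith [hypos m]
    · rintro (hyZ | hra | ⟨hxZ, hmem⟩)
      · exact subset_convexHull ℝ Z hyZ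
      · exact convexHull_mono hra (interior_subset hyP)
      · refine convexHull_mono ?_ hyj
        intro p hp
        rcases hp with rfl | ⟨⟨k, rfl⟩, hne⟩
        · exact hxZ
        · exact hmem k fun h => hne (by rw [h]; exact rfl)
  -- the closure system 𝒟
  have hGD : G ∈ 𝒟 := by
    rw [h𝒟]
    exact .inl ⟨subset_rfl, Set.inter_eq_right.mpr (subset_convexHull ℝ G)⟩
  have hranotSx : ¬ Set.range a ⊆ insert y (Set.range a \ {a i}) := by
    intro h
    rcases h ⟨i, rfl⟩ with hyi | hmem
    · exact hyD ⟨i, hyi⟩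
    · exact hmem.2 rfl
  have hranotSy : ¬ Set.range a ⊆ insert x (Set.range a \ {a j}) := by
    intro h
    rcases h ⟨j, rfl⟩ with hxj | hmem
    · exact hxD ⟨j, hxj⟩
    · exact hmem.2 rfl
  have hDmem : ∀ Z : Set (Fin n → ℝ), Z ⊆ G → ¬ Set.range a ⊆ Z → Z ∈ 𝒟 := by
    intro Z hZG hra
    rw [h𝒟]
    by_cases hcl : convexHull ℝ Z ∩ G = Z
    · exact .inl ⟨hZG, hcl⟩
    · have hsub : Z ⊆ convexHull ℝ Z ∩ G := Set.subset_inter (subset_convexHull ℝ Z) hZG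
      obtain ⟨p, hp, hpZ⟩ := Set.exists_of_ssubset (hsub.ssubset_of_ne fun h => hcl h.symm)
      rcases hGmem p hp.2 with ⟨m, rfl⟩ | rfl | rfl
      · exact absurd (hP3 Z hZG m hp.1) hpZ
      · rcases (hxhull Z hZG).mp hp.1 with h | h | ⟨hyZ, hmem⟩
        · exact absurd h hpZ
        · exact absurd h hra
        · have hZeq : Z = insert y (Set.range a \ {a i}) := by
            apply Set.Subset.antisymm
            · intro q hq
              rcases hGmem q (hZG hq) with ⟨k, rfl⟩ | rfl | rfl
              · have hki : k ≠ i := by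
                  intro hki'
                  apply hra
                  rintro _ ⟨k', rfl⟩
                  by_cases h' : k' = i
                  · rw [h', ← hki']; exact hq
                  · exact hmem k' h'
                exact Set.mem_insert_of_mem _ ⟨⟨k, rfl⟩, fun h => hki (hainj h)⟩
              · exact absurd hq hpZ
              · exact Set.mem_insert _ _
            · intro q hq
              rcases hq with rfl | ⟨⟨k, rfl⟩, hne⟩
              · exact hyZ
              · exact hmem k fun h => hne (by rw [h]; exact rfl)
          exact .inr (by rw [hZeq]; exact Set.mem_insert _ _)
      · rcases (hyhull Z hZG).mp hp.1 with h | h | ⟨hxZ, hmem⟩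
        · exact absurd h hpZ
        · exact absurd h hra
        · have hZeq : Z = insert x (Set.range a \ {a j}) := by
            apply Set.Subset.antisymm
            · intro q hq
              rcases hGmem q (hZG hq) with ⟨k, rfl⟩ | rfl | rfl
              · have hkj : k ≠ j := by
                  intro hki'
                  apply hra
                  rintro _ ⟨k', rfl⟩
                  by_cases h' : k' = j
                  · rw [h', ← hki']; exact hq
                  · exact hmem k' h'
                exact Set.mem_insert_of_mem _ ⟨⟨k, rfl⟩, fun h => hkj (hainj h)⟩
              · exact Set.mem_insert _ _
              · exact absurd hq hpZ
            · intro q hq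
              rcases hq with rfl | ⟨⟨k, rfl⟩, hne⟩
              · exact hxZ
              · exact hmem k fun h => hne (by rw [h]; exact rfl)
          exact .inr (by rw [hZeq]; exact Set.mem_insert_of_mem _ rfl)
  have hclC_not : ∀ Z : Set (Fin n → ℝ), Z ⊆ G → ¬ Set.range a ⊆ Z → clC Z = Z := by
    intro Z hZG hra
    rw [hclC]
    apply Set.Subset.antisymm
    · exact Set.sInter_subset_of_mem ⟨hDmem Z hZG hra, subset_rfl⟩
    · exact Set.subset_sInter fun W hW => hW.2
  have hclC_full : ∀ Z : Set (Fin n → ℝ), Z ⊆ G → Set.range a ⊆ Z → clC Z = Z ∪ {x, y} := by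
    intro Z hZG hra
    have hZG' : Z ∪ {x, y} = G := by
      apply Set.Subset.antisymm
      · refine Set.union_subset hZG ?_
        rw [hGdef]
        exact Set.subset_union_right
      · rw [hGdef]
        exact Set.union_subset_union_left _ hra
    rw [hclC]
    apply Set.Subset.antisymm
    · refine Set.sInter_subset_of_mem ⟨?_, Set.subset_union_left⟩
      rw [hZG']
      exact hGD
    · refine Set.subset_sInter fun W hW => ?_
      obtain ⟨hWD, hZW⟩ := hW
      refine Set.union_subset hZW ?_
      rw [h𝒟] at hWD
      rcases hWD with ⟨hWG, hWcl⟩ | hWs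
      · have hxW : x ∈ W := by
          rw [← hWcl]
          exact ⟨convexHull_mono (hra.trans hZW) (interior_subset hxP), hxG⟩
        have hyW : y ∈ W := by
          rw [← hWcl]
          exact ⟨convexHull_mono (hra.trans hZW) (interior_subset hyP), hyG⟩
        intro q hq
        rcases hq with rfl | rfl
        · exact hxW
        · exact hyW
      · exfalso
        rcases hWs with rfl | rfl
        · exact hranotSx (hra.trans hZW)
        · exact hranotSy (hra.trans hZW)
  -- K-side machinery
  set π : (Fin (n + 1) → ℝ) →ₗ[ℝ] (Fin n → ℝ) := LinearMap.funLeft ℝ ℝ Fin.castSucc with hπdef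
  have hπ : ∀ (p : Fin (n + 1) → ℝ) (m : Fin n), π p m = p m.castSucc := fun _ _ => rfl
  set cπ : Fin (n + 1) → (Fin n → ℝ) := fun k => π (c k) with hcπdef
  have hιc : ∀ k, iotaL n (cπ k) = c k := by
    intro k
    funext m
    have hi : iotaL n (cπ k) = Fin.snoc (cπ k) (0 : ℝ) := rfl
    rw [hi]
    refine Fin.lastCases ?_ (fun i' => ?_) m
    · rw [Fin.snoc_last]
      exact (hc0 k).symm
    · rw [Fin.snoc_castSucc]
      rfl
  have hcπ : AffineIndependent ℝ cπ := by
    apply AffineIndependent.of_comp (iotaL n).toAffineMap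
    have h2 : ⇑(iotaL n).toAffineMap ∘ cπ = c := by
      funext k
      exact hιc k
    rw [h2]
    exact hc
  have htopc : affineSpan ℝ (Set.range cπ) = ⊤ := by
    rw [hcπ.affineSpan_eq_top_iff_card_eq_finrank_add_one]
    simp [Module.finrank_fin_fun]
  let βc : AffineBasis (Fin (n + 1)) ℝ (Fin n → ℝ) := ⟨cπ, hcπ, htopc⟩
  have hcoordc : ∀ m k, βc.coord m (cπ k) = if m = k then 1 else 0 := fun m k =>
    βc.coord_apply m k
  -- the interior point u₀
  have hrangec : Set.range c = ⇑(iotaI n) '' Set.range cπ := by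
    have h2 : ⇑(iotaI n) ∘ cπ = c := by
      funext k
      exact hιc k
    rw [← Set.range_comp, h2]
  have hu' : u ∈ ⇑(iotaI n) '' intrinsicInterior ℝ (convexHull ℝ (Set.range cπ)) := by
    have hcoe : ⇑(iotaI n) = ⇑(iotaL n) := rfl
    have h1 : convexHull ℝ (Set.range c) = ⇑(iotaI n) '' convexHull ℝ (Set.range cπ) := by
      rw [hrangec, hcoe]
      exact ((iotaL n).image_convexHull _).symm
    rw [h1, (iotaI n).image_intrinsicInterior] at hu
    exact hu
  obtain ⟨u₀, hu₀, hu₀u⟩ := hu'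
  have hu₀int : u₀ ∈ interior (convexHull ℝ (Set.range cπ)) := by
    have hsp : affineSpan ℝ (convexHull ℝ (Set.range cπ)) = ⊤ := by
      rw [affineSpan_convexHull]
      exact htopc
    exact intrinsic_subset_interior_of_span_top hsp hu₀
  have hwpos : ∀ m, 0 < βc.coord m u₀ := by
    have h1 : u₀ ∈ interior (convexHull ℝ (Set.range ⇑βc)) := hu₀int
    rw [βc.interior_convexHull] at h1
    exact h1
  set w : Fin (n + 1) → ℝ := fun m => βc.coord m u₀ with hwdef
  have hwsum : ∑ m, w m = 1 := βc.sum_coord_apply_eq_one u₀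
  have hwlt : ∀ m, w m < 1 := fun m => coord_lt_one βc u₀ hwpos m
  have hucomb : ∑ k, w k • c k = u := by
    have h1 : ∑ k, w k • cπ k = u₀ := βc.linear_combination_coord_eq_self u₀
    have h2 : (iotaL n) (∑ k, w k • cπ k) = ∑ k, w k • iotaL n (cπ k) := by
      rw [map_sum]
      simp_rw [map_smul]
    simp_rw [← hιc, ← h2, h1]
    exact hu₀u
  have hulast : u (Fin.last n) = 0 := by
    rw [← hucomb]
    rw [Finset.sum_apply]
    simp [hc0]
  -- affine functionals on ℝ^{n+1}
  set tA : (Fin (n + 1) → ℝ) →ᵃ[ℝ] ℝ :=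
    (LinearMap.proj (Fin.last n) : (Fin (n + 1) → ℝ) →ₗ[ℝ] ℝ).toAffineMap with htAdef
  have htA : ∀ p, tA p = p (Fin.last n) := fun _ => rfl
  set gA : Fin (n + 1) → ((Fin (n + 1) → ℝ) →ᵃ[ℝ] ℝ) :=
    fun m => (βc.coord m).comp π.toAffineMap with hgAdef
  have hgA : ∀ m p, gA m p = βc.coord m (π p) := fun _ _ => rfl
  have hπb : ∀ k, π (b k) = cπ k := by
    intro k
    funext m
    rw [hπ, hb]
    rw [Pi.add_apply, Pi.single_eq_of_ne (Fin.castSucc_lt_last m).ne, add_zero]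
    rfl
  have hgc : ∀ m k, gA m (c k) = if m = k then 1 else 0 := fun m k => by
    rw [hgA]
    exact hcoordc m k
  have hgb : ∀ m k, gA m (b k) = if m = k then 1 else 0 := fun m k => by
    rw [hgA, hπb]
    exact hcoordc m k
  have hπu : π u = u₀ := by
    funext m
    rw [hπ, ← hu₀u]
    have hcoe : (iotaI n) u₀ = Fin.snoc u₀ (0 : ℝ) := rfl
    rw [hcoe, Fin.snoc_castSucc]
  have hgu : ∀ m, gA m u = w m := fun m => by rw [hgA, hπu]
  have hπv : π v = u₀ := by
    funext m
    rw [hπ, hv]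
    rw [Pi.add_apply, Pi.single_eq_of_ne (Fin.castSucc_lt_last m).ne, add_zero]
    have := congrFun hπu m
    rw [hπ] at this
    exact this
  have hgv : ∀ m, gA m v = w m := fun m => by rw [hgA, hπv]
  have htc : ∀ k, tA (c k) = 0 := fun k => by rw [htA]; exact hc0 k
  have htb : ∀ k, tA (b k) = 1 := fun k => by
    rw [htA, hb]
    rw [Pi.add_apply, Pi.single_eq_same, hc0, zero_add]
  have htu : tA u = 0 := by rw [htA]; exact hulast
  have htv : tA v = 1 := by
    rw [htA, hv]
    rw [Pi.add_apply, Pi.single_eq_same, hulast, zero_add]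
  -- distinctness of the points of K
  have hcinj : Function.Injective c := hc.injective
  have hbinj : Function.Injective b := by
    intro k k' h
    apply hcinj
    have h2 : c k + Pi.single (Fin.last n) 1 = c k' + Pi.single (Fin.last n) 1 := by
      rw [← hb, ← hb, h]
    exact add_right_cancel h2
  have hbc : ∀ k k', c k ≠ b k' := fun k k' h => by
    have := congrArg tA h
    rw [htc, htb] at this
    norm_num at this
  have hcu : ∀ k, c k ≠ u := fun k h => by
    obtain ⟨m, hm⟩ := exists_ne k
    have := congrArg (gA m) h
    rw [hgc, hgu, if_neg hm] at this
    exact absurd this.symm (ne_of_gt (hwpos m))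
  have hcv : ∀ k, c k ≠ v := fun k h => by
    have := congrArg tA h
    rw [htc, htv] at this
    norm_num at this
  have hbu : ∀ k, b k ≠ u := fun k h => by
    have := congrArg tA h
    rw [htb, htu] at this
    norm_num at this
  have hbv : ∀ k, b k ≠ v := fun k h => by
    obtain ⟨m, hm⟩ := exists_ne k
    have := congrArg (gA m) h
    rw [hgb, hgv, if_neg hm] at this
    exact absurd this.symm (ne_of_gt (hwpos m))
  have huv : u ≠ v := fun h => by
    have := congrArg tA h
    rw [htu, htv] at this
    norm_num at this
  -- the map φ
  set f : (Fin n → ℝ) → Set (Fin (n + 1) → ℝ) := fun s =>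
    {p | (s = x ∧ p = u) ∨ (s = y ∧ p = v) ∨ ∃ k, s = a k ∧ (p = c k ∨ p = b k)} with hfdef
  set φ : Set (Fin n → ℝ) → Set (Fin (n + 1) → ℝ) := fun S => ⋃ s ∈ S, f s with hφdef
  have hφmem : ∀ (Z : Set (Fin n → ℝ)) (p : Fin (n + 1) → ℝ), p ∈ φ Z ↔
      ((∃ k, a k ∈ Z ∧ (p = c k ∨ p = b k)) ∨ (p = u ∧ x ∈ Z) ∨ (p = v ∧ y ∈ Z)) := by
    intro Z p
    constructor
    · intro hp
      obtain ⟨s, hsZ, hps⟩ := Set.mem_iUnion₂.mp hp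
      simp only [hfdef, Set.mem_setOf_eq] at hps
      rcases hps with ⟨rfl, rfl⟩ | ⟨rfl, rfl⟩ | ⟨k, rfl, hcb⟩
      · exact .inr (.inl ⟨rfl, hsZ⟩)
      · exact .inr (.inr ⟨rfl, hsZ⟩)
      · exact .inl ⟨k, hsZ, hcb⟩
    · rintro (⟨k, hk, hcb⟩ | ⟨rfl, hxZ⟩ | ⟨rfl, hyZ⟩)
      · exact Set.mem_biUnion hk (.inr (.inr ⟨k, rfl, hcb⟩))
      · exact Set.mem_biUnion hxZ (.inl ⟨rfl, rfl⟩)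
      · exact Set.mem_biUnion hyZ (.inr (.inl ⟨rfl, rfl⟩))
  have hφc : ∀ (Z : Set (Fin n → ℝ)) (k), c k ∈ φ Z ↔ a k ∈ Z := by
    intro Z k
    constructor
    · intro h
      rcases (hφmem Z (c k)).mp h with ⟨k', hk', h' | h'⟩ | ⟨h', _⟩ | ⟨h', _⟩
      · cases hcinj h'
        exact hk'
      · exact absurd h' (hbc k k')
      · exact absurd h' (hcu k)
      · exact absurd h' (hcv k)
    · intro h
      exact (hφmem Z (c k)).mpr (.inl ⟨k, h, .inl rfl⟩)
  have hφb : ∀ (Z : Set (Fin n → ℝ)) (k), b k ∈ φ Z ↔ a k ∈ Z := by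
    intro Z k
    constructor
    · intro h
      rcases (hφmem Z (b k)).mp h with ⟨k', hk', h' | h'⟩ | ⟨h', _⟩ | ⟨h', _⟩
      · exact absurd h'.symm (hbc k' k)
      · cases hbinj h'
        exact hk'
      · exact absurd h' (hbu k)
      · exact absurd h' (hbv k)
    · intro h
      exact (hφmem Z (b k)).mpr (.inl ⟨k, h, .inr rfl⟩)
  have hφu : ∀ Z : Set (Fin n → ℝ), u ∈ φ Z ↔ x ∈ Z := by
    intro Z
    constructor
    · intro h
      rcases (hφmem Z u).mp h with ⟨k', _, h' | h'⟩ | ⟨_, hx'⟩ | ⟨h', _⟩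
      · exact absurd h'.symm (hcu k')
      · exact absurd h'.symm (hbu k')
      · exact hx'
      · exact absurd h' huv
    · intro h
      exact (hφmem Z u).mpr (.inr (.inl ⟨rfl, h⟩))
  have hφv : ∀ Z : Set (Fin n → ℝ), v ∈ φ Z ↔ y ∈ Z := by
    intro Z
    constructor
    · intro h
      rcases (hφmem Z v).mp h with ⟨k', _, h' | h'⟩ | ⟨h', _⟩ | ⟨_, hy'⟩
      · exact absurd h'.symm (hcv k')
      · exact absurd h'.symm (hbv k')
      · exact absurd h'.symm huv
      · exact hy'
    · intro h
      exact (hφmem Z v).mpr (.inr (.inr ⟨rfl, h⟩))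
  have hφK : ∀ Z : Set (Fin n → ℝ), φ Z ⊆ K := by
    intro Z p hp
    rw [hK]
    rcases (hφmem Z p).mp hp with ⟨k, _, rfl | rfl⟩ | ⟨rfl, _⟩ | ⟨rfl, _⟩
    · exact .inl (.inl ⟨k, rfl⟩)
    · exact .inl (.inr ⟨k, rfl⟩)
    · exact .inr (.inl rfl)
    · exact .inr (.inr rfl)
  -- hull membership characterizations on the K side
  have hQc : ∀ (Z : Set (Fin n → ℝ)) (m), c m ∈ convexHull ℝ (φ Z) → a m ∈ Z := by
    intro Z m hm
    by_contra ham
    have hbd : ∀ p ∈ φ Z, gA m p + 0 * tA p ≤ w m := by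
      intro p hp
      rcases (hφmem Z p).mp hp with ⟨k, hk, rfl | rfl⟩ | ⟨rfl, _⟩ | ⟨rfl, _⟩
      · have hmk : ¬ m = k := fun h => ham (by rw [h]; exact hk)
        rw [hgc, if_neg hmk, zero_mul, add_zero]
        exact (hwpos m).le
      · have hmk : ¬ m = k := fun h => ham (by rw [h]; exact hk)
        rw [hgb, if_neg hmk, zero_mul, add_zero]
        exact (hwpos m).le
      · rw [hgu, zero_mul, add_zero]
      · rw [hgv, zero_mul, add_zero]
    have hle := hull_bound (gA m) tA 0 (w m) (φ Z) hbd (c m) hm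
    rw [hgc, if_pos rfl, zero_mul, add_zero] at hle
    linarith [hwlt m]
  have hQb : ∀ (Z : Set (Fin n → ℝ)) (m), b m ∈ convexHull ℝ (φ Z) → a m ∈ Z := by
    intro Z m hm
    by_contra ham
    have hbd : ∀ p ∈ φ Z, gA m p + 0 * tA p ≤ w m := by
      intro p hp
      rcases (hφmem Z p).mp hp with ⟨k, hk, rfl | rfl⟩ | ⟨rfl, _⟩ | ⟨rfl, _⟩
      · have hmk : ¬ m = k := fun h => ham (by rw [h]; exact hk)
        rw [hgc, if_neg hmk, zero_mul, add_zero]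
        exact (hwpos m).le
      · have hmk : ¬ m = k := fun h => ham (by rw [h]; exact hk)
        rw [hgb, if_neg hmk, zero_mul, add_zero]
        exact (hwpos m).le
      · rw [hgu, zero_mul, add_zero]
      · rw [hgv, zero_mul, add_zero]
    have hle := hull_bound (gA m) tA 0 (w m) (φ Z) hbd (b m) hm
    rw [hgb, if_pos rfl, zero_mul, add_zero] at hle
    linarith [hwlt m]
  have hQu : ∀ Z : Set (Fin n → ℝ), u ∈ convexHull ℝ (φ Z) → (x ∈ Z ∨ Set.range a ⊆ Z) := by
    intro Z hm
    by_contra hcon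
    push_neg at hcon
    obtain ⟨hxZ, hra⟩ := hcon
    obtain ⟨q, ⟨m, rfl⟩, hq⟩ := Set.not_subset.mp hra
    have hbd : ∀ p ∈ φ Z, gA m p + (-(w m)) * tA p ≤ 0 := by
      intro p hp
      rcases (hφmem Z p).mp hp with ⟨k, hk, rfl | rfl⟩ | ⟨rfl, hx'⟩ | ⟨rfl, _⟩
      · have hmk : ¬ m = k := fun h => hq (by rw [h]; exact hk)
        rw [hgc, if_neg hmk, htc]
        simp
      · have hmk : ¬ m = k := fun h => hq (by rw [h]; exact hk)
        rw [hgb, if_neg hmk, htb]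
        simp [(hwpos m).le]
        exact (hwpos m).le
      · exact absurd hx' hxZ
      · rw [hgv, htv]
        simp
    have hle := hull_bound (gA m) tA (-(w m)) 0 (φ Z) hbd u hm
    rw [hgu, htu] at hle
    simp at hle
    linarith [hwpos m]
  have hQv : ∀ Z : Set (Fin n → ℝ), v ∈ convexHull ℝ (φ Z) → (y ∈ Z ∨ Set.range a ⊆ Z) := by
    intro Z hm
    by_contra hcon
    push_neg at hcon
    obtain ⟨hyZ, hra⟩ := hcon
    obtain ⟨q, ⟨m, rfl⟩, hq⟩ := Set.not_subset.mp hra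
    have hbd : ∀ p ∈ φ Z, gA m p + (w m) * tA p ≤ w m := by
      intro p hp
      rcases (hφmem Z p).mp hp with ⟨k, hk, rfl | rfl⟩ | ⟨rfl, _⟩ | ⟨rfl, hy'⟩
      · have hmk : ¬ m = k := fun h => hq (by rw [h]; exact hk)
        rw [hgc, if_neg hmk, htc]
        simp [(hwpos m).le]
        exact (hwpos m).le
      · have hmk : ¬ m = k := fun h => hq (by rw [h]; exact hk)
        rw [hgb, if_neg hmk, htb]
        simp
      · rw [hgu, htu]
        simp
      · exact absurd hy' hyZ
    have hle := hull_bound (gA m) tA (w m) (w m) (φ Z) hbd v hm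
    rw [hgv, htv, mul_one] at hle
    linarith [hwpos m]
  have hMu : ∀ Z : Set (Fin n → ℝ), Set.range a ⊆ Z → u ∈ convexHull ℝ (φ Z) := by
    intro Z hra
    have hcm : Finset.univ.centerMass w c ∈ convexHull ℝ (φ Z) :=
      Finset.centerMass_mem_convexHull _ (fun k _ => (hwpos k).le)
        (by rw [hwsum]; exact one_pos) (fun k _ => (hφc Z k).mpr (hra ⟨k, rfl⟩))
    rwa [Finset.centerMass_eq_of_sum_1 _ _ hwsum, hucomb] at hcm
  have hMv : ∀ Z : Set (Fin n → ℝ), Set.range a ⊆ Z → v ∈ convexHull ℝ (φ Z) := by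
    intro Z hra
    have hvcomb : ∑ k, w k • b k = v := by
      rw [hv, ← hucomb]
      simp_rw [hb, smul_add]
      rw [Finset.sum_add_distrib, ← Finset.sum_smul, hwsum, one_smul]
    have hcm : Finset.univ.centerMass w b ∈ convexHull ℝ (φ Z) :=
      Finset.centerMass_mem_convexHull _ (fun k _ => (hwpos k).le)
        (by rw [hwsum]; exact one_pos) (fun k _ => (hφb Z k).mpr (hra ⟨k, rfl⟩))
    rwa [Finset.centerMass_eq_of_sum_1 _ _ hwsum, hvcomb] at hcm
  -- the main computation
  have hMain : ∀ Z : Set (Fin n → ℝ), Z ⊆ G → convexHull ℝ (φ Z) ∩ K = φ (clC Z) := by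
    intro Z hZG
    by_cases hra : Set.range a ⊆ Z
    · rw [hclC_full Z hZG hra]
      ext p
      constructor
      · rintro ⟨hpH, hpK⟩
        rw [hK] at hpK
        rcases hpK with (⟨m, rfl⟩ | ⟨m, rfl⟩) | hpuv
        · exact (hφc _ m).mpr (.inl (hQc Z m hpH))
        · exact (hφb _ m).mpr (.inl (hQb Z m hpH))
        · rcases hpuv with rfl | rfl
          · exact (hφu _).mpr (.inr (Set.mem_insert _ _))
          · exact (hφv _).mpr (.inr (Set.mem_insert_of_mem _ rfl))
      · intro hp
        rcases (hφmem _ p).mp hp with ⟨k, hk, hcb⟩ | ⟨rfl, _⟩ | ⟨rfl, _⟩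
        · have hkZ : a k ∈ Z := by
            rcases hk with hk | hk
            · exact hk
            · rcases hk with hk | hk
              · exact absurd hk (haxk k)
              · exact absurd hk (hayk k)
          refine ⟨?_, ?_⟩
          · rcases hcb with rfl | rfl
            · exact subset_convexHull ℝ _ ((hφc Z k).mpr hkZ)
            · exact subset_convexHull ℝ _ ((hφb Z k).mpr hkZ)
          · rw [hK]
            rcases hcb with rfl | rfl
            · exact .inl (.inl ⟨k, rfl⟩)
            · exact .inl (.inr ⟨k, rfl⟩)
        · exact ⟨hMu Z hra, by rw [hK]; exact .inr (.inl rfl)⟩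
        · exact ⟨hMv Z hra, by rw [hK]; exact .inr (.inr rfl)⟩
    · rw [hclC_not Z hZG hra]
      ext p
      constructor
      · rintro ⟨hpH, hpK⟩
        rw [hK] at hpK
        rcases hpK with (⟨m, rfl⟩ | ⟨m, rfl⟩) | hpuv
        · exact (hφc _ m).mpr (hQc Z m hpH)
        · exact (hφb _ m).mpr (hQb Z m hpH)
        · rcases hpuv with rfl | rfl
          · rcases hQu Z hpH with h | h
            · exact (hφu _).mpr h
            · exact absurd h hra
          · rcases hQv Z hpH with h | h
            · exact (hφv _).mpr h
            · exact absurd h hra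
      · intro hp
        exact ⟨subset_convexHull ℝ _ hp, hφK Z hp⟩
  -- injectivity helper
  have hkey : ∀ X' Y' : Set (Fin n → ℝ), X' ⊆ G → φ X' = φ Y' → X' ⊆ Y' := by
    intro X' Y' hXG h s hs
    rcases hGmem s (hXG hs) with ⟨k, rfl⟩ | rfl | rfl
    · exact (hφc Y' k).mp (h ▸ (hφc X' k).mpr hs)
    · exact (hφu Y').mp (h ▸ (hφu X').mpr hs)
    · exact (hφv Y').mp (h ▸ (hφv X').mpr hs)
  -- the fibers of distinct points are disjoint
  have hfdisj : ∀ (s s' : Fin n → ℝ) (p : Fin (n + 1) → ℝ), p ∈ f s → p ∈ f s' → s = s' := by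
    intro s s' p hp hp'
    simp only [hfdef, Set.mem_setOf_eq] at hp hp'
    rcases hp with ⟨hs, hpu⟩ | ⟨hs, hpv⟩ | ⟨k, hs, hpc⟩ <;>
      rcases hp' with ⟨hs', h2⟩ | ⟨hs', h2⟩ | ⟨k', hs', h2⟩
    · rw [hs, hs']
    · exact absurd (hpu.symm.trans h2) huv
    · rcases h2 with h2 | h2
      · exact absurd (hpu.symm.trans h2).symm (hcu k')
      · exact absurd (hpu.symm.trans h2).symm (hbu k')
    · exact absurd (h2.symm.trans hpv) huv
    · rw [hs, hs']
    · rcases h2 with h2 | h2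
      · exact absurd (hpv.symm.trans h2).symm (hcv k')
      · exact absurd (hpv.symm.trans h2).symm (hbv k')
    · rcases hpc with h3 | h3
      · exact absurd (h3.symm.trans h2).symm (hcu k).symm
      · exact absurd (h3.symm.trans h2) (hbu k)
    · rcases hpc with h3 | h3
      · exact absurd (h3.symm.trans h2) (hcv k)
      · exact absurd (h3.symm.trans h2) (hbv k)
    · rcases hpc with h3 | h3 <;> rcases h2 with h2 | h2
      · rw [hs, hs', hcinj (h3.symm.trans h2)]
      · exact absurd (h3.symm.trans h2) (hbc k k')
      · exact absurd (h2.symm.trans h3) (hbc k' k)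
      · rw [hs, hs', hbinj (h3.symm.trans h2)]
  -- assembling everything
  refine ⟨φ, ?_, ?_, ?_, ?_, ?_, ?_, ?_, ?_, ?_⟩
  · simp [hφdef]
  · intro k
    ext p
    rw [hφmem]
    constructor
    · rintro (⟨k', hk', h⟩ | ⟨rfl, hx'⟩ | ⟨rfl, hy'⟩)
      · cases hainj hk'
        rcases h with rfl | rfl
        · exact Set.mem_insert _ _
        · exact Set.mem_insert_of_mem _ rfl
      · exact absurd hx'.symm (haxk k)
      · exact absurd hy'.symm (hayk k)
    · intro hp
      rcases hp with rfl | rfl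
      · exact .inl ⟨k, rfl, .inl rfl⟩
      · exact .inl ⟨k, rfl, .inr rfl⟩
  · ext p
    rw [hφmem]
    constructor
    · rintro (⟨k', hk', h⟩ | ⟨rfl, hx'⟩ | ⟨rfl, hy'⟩)
      · exact absurd hk' (haxk k')
      · exact rfl
      · exact absurd hy' (fun h => hxy h.symm)
    · rintro rfl
      exact .inr (.inl ⟨rfl, rfl⟩)
  · ext p
    rw [hφmem]
    constructor
    · rintro (⟨k', hk', h⟩ | ⟨rfl, hx'⟩ | ⟨rfl, hy'⟩)
      · exact absurd hk' (hayk k')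
      · exact absurd hx' hxy
      · exact rfl
    · rintro rfl
      exact .inr (.inr ⟨rfl, rfl⟩)
  · intro S _ _
    have hsingle : ∀ s : Fin n → ℝ, φ {s} = f s := fun s => Set.biUnion_singleton s f
    rw [Set.iUnion₂_congr fun (s : Fin n → ℝ) (_ : s ∈ S) => hsingle s]
  · intro X hXG hXcl
    refine ⟨hφK X, ?_⟩
    have h := hMain X hXG
    rw [hXcl] at h
    exact h
  · intro X Y hXG _ hYG _ h
    exact Set.Subset.antisymm (hkey X Y hXG h) (hkey Y X hYG h.symm)
  · intro X Y _ _ _ _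
    ext p
    constructor
    · intro hp
      obtain ⟨s, hs, hps⟩ := Set.mem_iUnion₂.mp hp
      exact ⟨Set.mem_biUnion hs.1 hps, Set.mem_biUnion hs.2 hps⟩
    · rintro ⟨hpX, hpY⟩
      obtain ⟨s, hsX, hps⟩ := Set.mem_iUnion₂.mp hpX
      obtain ⟨s', hsY, hps'⟩ := Set.mem_iUnion₂.mp hpY
      obtain rfl := hfdisj s s' p hps hps'
      exact Set.mem_biUnion ⟨hsX, hsY⟩ hps
  · intro X Y hXG _ hYG _
    have h1 : φ X ∪ φ Y = φ (X ∪ Y) := (Set.biUnion_union X Y f).symm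
    rw [h1]
    exact (hMain (X ∪ Y) (Set.union_subset hXG hYG)).symm
end

section
/- With the construction of K: for every proper subset I ⊊ {0, …, n}, u ∉ convexHull ℝ ({v} ∪ {cᵢ : i ∈ I} ∪ {bᵢ : i ∈ I}), and symmetrically v ∉ convexHull ℝ ({u} ∪ {cᵢ : i ∈ I} ∪ {bᵢ : i ∈ I}). -/
open Finset

/-- weights on indices from membership in the hull of an image -/
lemma lemA {m : ℕ} (c : Fin m → (Fin m → ℝ)) (I : Set (Fin m)) (x : Fin m → ℝ)
    (hx : x ∈ convexHull ℝ (c '' I)) :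
    ∃ a : Fin m → ℝ, (∀ i, 0 ≤ a i) ∧ ∑ i, a i = 1 ∧ (∀ j ∉ I, a j = 0) ∧
      ∑ i, a i • c i = x := by
  rw [mem_convexHull_iff_exists_fintype] at hx
  obtain ⟨ι, _, w, z, hw0, hw1, hz, hzx⟩ := hx
  choose g hgI hgz using fun i => hz i
  refine ⟨fun k => ∑ i, if g i = k then w i else 0, ?_, ?_, ?_, ?_⟩
  · intro k
    refine Finset.sum_nonneg fun i _ => ?_
    split_ifs
    exacts [hw0 i, le_refl 0]
  · rw [Finset.sum_comm]
    simpa using hw1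
  · intro j hj
    refine Finset.sum_eq_zero fun i _ => ?_
    exact if_neg fun (h : g i = j) => hj (h ▸ hgI i)
  · rw [← hzx]
    simp_rw [Finset.sum_smul, ite_smul, zero_smul]
    rw [Finset.sum_comm]
    refine Finset.sum_congr rfl fun i _ => ?_
    simp [hgz i]


lemma lemB {m : ℕ} (c : Fin m → (Fin m → ℝ)) (hc : AffineIndependent ℝ c)
    (u : Fin m → ℝ)
    (hu : u ∈ intrinsicInterior ℝ (convexHull ℝ (Set.range c)))
    (a : Fin m → ℝ) (j : Fin m) (ha0 : ∀ i, 0 ≤ a i) (ha1 : ∑ i, a i = 1)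
    (haj : a j = 0) (hau : ∑ i, a i • c i = u) : False := by
  classical
  set S : Set (Fin m → ℝ) := convexHull ℝ (Set.range c) with hS
  obtain ⟨t, htpos, hwS⟩ : ∃ t : ℝ, 0 < t ∧ u + t • (u - c j) ∈ S := by
    rw [mem_intrinsicInterior] at hu
    obtain ⟨y, hy, hyu⟩ := hu
    have huS : u ∈ affineSpan ℝ S := hyu ▸ y.2
    have hcjS : c j ∈ affineSpan ℝ S :=
      subset_affineSpan ℝ S (subset_convexHull ℝ _ ⟨j, rfl⟩)
    have hmem : ∀ t : ℝ, u + t • (u - c j) ∈ affineSpan ℝ S := by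
      intro t
      have := AffineSubspace.smul_vsub_vadd_mem (affineSpan ℝ S) t huS hcjS huS
      simpa [vsub_eq_sub, vadd_eq_add, add_comm] using this
    set γ : ℝ → affineSpan ℝ S := fun t => ⟨u + t • (u - c j), hmem t⟩ with hγ
    have hγcont : Continuous γ := by
      refine Continuous.subtype_mk ?_ _
      fun_prop
    have hγ0 : γ 0 = y := Subtype.ext (by simp [hγ, hyu])
    have hopen : IsOpen (γ ⁻¹' interior ((↑) ⁻¹' S : Set (affineSpan ℝ S))) :=
      isOpen_interior.preimage hγcont
    have h0mem : (0 : ℝ) ∈ γ ⁻¹' interior ((↑) ⁻¹' S : Set (affineSpan ℝ S)) := by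
      simp only [Set.mem_preimage, hγ0]; exact hy
    obtain ⟨ε, hε, hball⟩ := Metric.isOpen_iff.mp hopen 0 h0mem
    have htball : ε / 2 ∈ Metric.ball (0 : ℝ) ε := by
      simp only [Metric.mem_ball, Real.dist_eq, sub_zero]
      rw [abs_of_pos (by positivity)]
      linarith
    exact ⟨ε / 2, by positivity,
      (interior_subset (hball htball) : γ (ε / 2) ∈ Subtype.val ⁻¹' S)⟩
  rw [hS, convexHull_range_eq_exists_affineCombination] at hwS
  obtain ⟨s, w, hw0, hw1, hcomb⟩ := hwS
  -- extend w to univ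
  set w' : Fin m → ℝ := Set.indicator ↑s w with hw'
  have hw'0 : ∀ i, 0 ≤ w' i := by
    intro i
    by_cases h : i ∈ (s : Set (Fin m)) <;> simp [hw', Set.indicator, h]
    exact hw0 i h
  have hw'1 : ∑ i, w' i = 1 := by
    rw [hw', ← hw1]
    rw [Finset.sum_indicator_subset _ (Finset.subset_univ s)]
  have hcomb' : ∑ i, w' i • c i = u + t • (u - c j) := by
    have h1 : Finset.univ.affineCombination ℝ c w' = u + t • (u - c j) := by
      rw [hw', ← Finset.affineCombination_indicator_subset w c (Finset.subset_univ s), hcomb]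
    rw [← h1, Finset.affineCombination_eq_linear_combination _ _ _ hw'1]
  -- second representation of u
  have h1t : (1 : ℝ) + t ≠ 0 := by positivity
  set s1 : ℝ := (1 + t)⁻¹ with hs1
  set d : Fin m → ℝ := fun i => s1 * w' i + (if i = j then s1 * t else 0) with hd
  have hd1 : ∑ i, d i = 1 := by
    rw [hd, Finset.sum_add_distrib, ← Finset.mul_sum, hw'1, Finset.sum_ite_eq' _ j]
    simp only [Finset.mem_univ, if_true, mul_one, hs1]
    field_simp
  have hdu : ∑ i, d i • c i = u := by
    rw [hd]
    simp_rw [add_smul, ite_smul, zero_smul]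
    rw [Finset.sum_add_distrib, Finset.sum_ite_eq' _ j (fun i => (s1 * t) • c i)]
    simp only [Finset.mem_univ, if_true]
    simp_rw [mul_smul]
    rw [← Finset.smul_sum, hcomb']
    rw [hs1]
    match_scalars <;> field_simp <;> ring
  -- uniqueness of affine combinations
  have hcombu : Finset.univ.affineCombination ℝ c a = Finset.univ.affineCombination ℝ c d := by
    rw [Finset.affineCombination_eq_linear_combination _ _ _ ha1,
      Finset.affineCombination_eq_linear_combination _ _ _ hd1, hau, hdu]
  have had := (affineIndependent_iff_eq_of_fintype_affineCombination_eq ℝ c).mp hc a d ha1 hd1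
    hcombu
  have hdj : a j = s1 * w' j + s1 * t := by
    rw [had]; simp [hd]
  rw [haj] at hdj
  have hs1pos : 0 < s1 := by rw [hs1]; positivity
  nlinarith [hw'0 j]

lemma lemC {E : Type*} [AddCommGroup E] [Module ℝ E] (L : E →ₗ[ℝ] ℝ) (T : Set E)
    (h01 : ∀ p ∈ T, L p = 0 ∨ L p = 1) (x : E) (hx : x ∈ convexHull ℝ T) (hx0 : L x = 0) :
    x ∈ convexHull ℝ {p | p ∈ T ∧ L p = 0} := by
  classical
  rw [mem_convexHull_iff_exists_fintype] at hx
  obtain ⟨ι, _, w, z, hw0, hw1, hz, hzx⟩ := hx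
  have hsum : ∑ i, w i * L (z i) = 0 := by
    rw [← hx0, ← hzx, map_sum]
    simp [smul_eq_mul]
  have hterm : ∀ i ∈ Finset.univ, w i * L (z i) = 0 :=
    (Finset.sum_eq_zero_iff_of_nonneg (fun i _ => by
      rcases h01 _ (hz i) with h | h <;> simp [h, hw0 i])).mp hsum
  have hkey : ∀ i, L (z i) = 1 → w i = 0 := by
    intro i h
    have := hterm i (Finset.mem_univ i)
    rw [h, mul_one] at this
    exact this
  obtain ⟨i₀, -, hi₀⟩ := Finset.exists_ne_zero_of_sum_ne_zero (by rw [hw1]; norm_num :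
    ∑ i, w i ≠ 0)
  have hLz0 : L (z i₀) = 0 := by
    rcases h01 _ (hz i₀) with h | h
    · exact h
    · exact absurd (hkey i₀ h) hi₀
  refine mem_convexHull_of_exists_fintype w (fun i => if L (z i) = 0 then z i else z i₀)
    hw0 hw1 ?_ ?_
  · intro i
    by_cases h : L (z i) = 0
    · rw [if_pos h]; exact ⟨hz i, h⟩
    · rw [if_neg h]; exact ⟨hz i₀, hLz0⟩
  · rw [← hzx]
    refine Finset.sum_congr rfl fun i _ => ?_
    by_cases h : L (z i) = 0
    · simp [h]
    · rcases h01 _ (hz i) with h' | h'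
      · exact absurd h' h
      · simp [hkey i h']

lemma lemC' {E : Type*} [AddCommGroup E] [Module ℝ E] (L : E →ₗ[ℝ] ℝ) (T : Set E)
    (h01 : ∀ p ∈ T, L p = 0 ∨ L p = 1) (x : E) (hx : x ∈ convexHull ℝ T) (hx1 : L x = 1) :
    x ∈ convexHull ℝ {p | p ∈ T ∧ L p = 1} := by
  classical
  rw [mem_convexHull_iff_exists_fintype] at hx
  obtain ⟨ι, _, w, z, hw0, hw1, hz, hzx⟩ := hx
  have hsum : ∑ i, w i * (1 - L (z i)) = 0 := by
    have h1 : ∑ i, w i * L (z i) = 1 := by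
      rw [← hx1, ← hzx, map_sum]
      simp [smul_eq_mul]
    simp only [mul_sub, mul_one, Finset.sum_sub_distrib, hw1, h1, sub_self]
  have hterm : ∀ i ∈ Finset.univ, w i * (1 - L (z i)) = 0 :=
    (Finset.sum_eq_zero_iff_of_nonneg (fun i _ => by
      rcases h01 _ (hz i) with h | h <;> simp [h, hw0 i])).mp hsum
  have hkey : ∀ i, L (z i) = 0 → w i = 0 := by
    intro i h
    have := hterm i (Finset.mem_univ i)
    rw [h, sub_zero, mul_one] at this
    exact this
  obtain ⟨i₀, -, hi₀⟩ := Finset.exists_ne_zero_of_sum_ne_zero (by rw [hw1]; norm_num :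
    ∑ i, w i ≠ 0)
  have hLz1 : L (z i₀) = 1 := by
    rcases h01 _ (hz i₀) with h | h
    · exact absurd (hkey i₀ h) hi₀
    · exact h
  refine mem_convexHull_of_exists_fintype w (fun i => if L (z i) = 1 then z i else z i₀)
    hw0 hw1 ?_ ?_
  · intro i
    by_cases h : L (z i) = 1
    · rw [if_pos h]; exact ⟨hz i, h⟩
    · rw [if_neg h]; exact ⟨hz i₀, hLz1⟩
  · rw [← hzx]
    refine Finset.sum_congr rfl fun i _ => ?_
    by_cases h : L (z i) = 1
    · simp [h]
    · rcases h01 _ (hz i) with h' | h'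
      · simp [hkey i h']
      · exact absurd h' h

/-- with the construction of `K` (`bᵢ = cᵢ + e`, `v = u + e`,
`u` in the relative interior of the simplex spanned by the `cᵢ`), for every proper
subset `I ⊊ {0, …, n}`, `u` is not in the convex hull of `{v} ∪ {cᵢ, bᵢ : i ∈ I}`,
and symmetrically `v` is not in the convex hull of `{u} ∪ {cᵢ, bᵢ : i ∈ I}`. -/
theorem stmt_8 (n : ℕ)
    (c : Fin (n + 1) → (Fin (n + 1) → ℝ)) (hc : AffineIndependent ℝ c)
    (hc0 : ∀ k, c k (Fin.last n) = 0)
    (u : Fin (n + 1) → ℝ)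
    (hu : u ∈ intrinsicInterior ℝ (convexHull ℝ (Set.range c)))
    (b : Fin (n + 1) → (Fin (n + 1) → ℝ))
    (hb : ∀ k, b k = c k + Pi.single (Fin.last n) 1)
    (v : Fin (n + 1) → ℝ) (hv : v = u + Pi.single (Fin.last n) 1)
    (I : Set (Fin (n + 1))) (hI : I ⊂ Set.univ) :
    u ∉ convexHull ℝ (insert v (c '' I ∪ b '' I)) ∧
    v ∉ convexHull ℝ (insert u (c '' I ∪ b '' I)) := by
  classical
  obtain ⟨j, -, hjI⟩ := Set.exists_of_ssubset hI
  set L : (Fin (n + 1) → ℝ) →ₗ[ℝ] ℝ := LinearMap.proj (Fin.last n) with hL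
  have hul : u (Fin.last n) = 0 := by
    have huS : u ∈ convexHull ℝ (Set.range c) := intrinsicInterior_subset hu
    have hsub : convexHull ℝ (Set.range c) ⊆ {x | x (Fin.last n) = 0} := by
      refine convexHull_min ?_ ?_
      · rintro _ ⟨k, rfl⟩
        exact hc0 k
      · intro x hx y hy p q hp hq hpq
        simp only [Set.mem_setOf_eq] at *
        simp [hx, hy]
    exact hsub huS
  have hbl : ∀ k, b k (Fin.last n) = 1 := by
    intro k
    simp [hb k, hc0 k]
  have hvl : v (Fin.last n) = 1 := by simp [hv, hul]
  constructor
  · intro hmem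
    have h01 : ∀ p ∈ insert v (c '' I ∪ b '' I), L p = 0 ∨ L p = 1 := by
      rintro p (rfl | ⟨k, -, rfl⟩ | ⟨k, -, rfl⟩)
      · exact Or.inr hvl
      · exact Or.inl (hc0 k)
      · exact Or.inr (hbl k)
    have h2 := lemC L _ h01 u hmem hul
    have hsub2 : {p | p ∈ insert v (c '' I ∪ b '' I) ∧ L p = 0} ⊆ c '' I := by
      rintro p ⟨(rfl | hp | hp), hp0⟩
      · rw [hL, LinearMap.proj_apply, hvl] at hp0
        norm_num at hp0
      · exact hp
      · obtain ⟨k, -, rfl⟩ := hp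
        rw [hL, LinearMap.proj_apply, hbl k] at hp0
        norm_num at hp0
    have h3 : u ∈ convexHull ℝ (c '' I) := convexHull_mono hsub2 h2
    obtain ⟨a, ha0, ha1, haI, hau⟩ := lemA c I u h3
    exact lemB c hc u hu a j ha0 ha1 (haI j hjI) hau
  · intro hmem
    have h01 : ∀ p ∈ insert u (c '' I ∪ b '' I), L p = 0 ∨ L p = 1 := by
      rintro p (rfl | ⟨k, -, rfl⟩ | ⟨k, -, rfl⟩)
      · exact Or.inl hul
      · exact Or.inl (hc0 k)
      · exact Or.inr (hbl k)
    have h2 := lemC' L _ h01 v hmem hvl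
    have hsub2 : {p | p ∈ insert u (c '' I ∪ b '' I) ∧ L p = 1} ⊆ b '' I := by
      rintro p ⟨(rfl | hp | hp), hp1⟩
      · rw [hL, LinearMap.proj_apply, hul] at hp1
        norm_num at hp1
      · obtain ⟨k, -, rfl⟩ := hp
        rw [hL, LinearMap.proj_apply, hc0 k] at hp1
        norm_num at hp1
      · exact hp
    have h3 : v ∈ convexHull ℝ (b '' I) := convexHull_mono hsub2 h2
    obtain ⟨a, ha0, ha1, haI, hav⟩ := lemA b I v h3
    have hsum : ∑ i, a i • c i = u := by
      have hbc : ∑ i, a i • b i = (∑ i, a i • c i) + Pi.single (Fin.last n) 1 := by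
        simp_rw [hb, smul_add]
        rw [Finset.sum_add_distrib, ← Finset.sum_smul, ha1, one_smul]
      rw [hbc, hv] at hav
      exact add_right_cancel hav
    exact lemB c hc u hu a j ha0 ha1 (haI j hjI) hsum
end
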